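/- arXiv:1706.06583 — 3 statements merged into one kernel-verified Lean document; each statement's English description precedes it below -/
import Mathlib

section
/- The metric dimension of any affine plane of order q ≥ 13 is 3q − 4. -/
open Set

set_option linter.unusedSectionVars false
set_option maxHeartbeats 1000000

/-- The bipartite point-line incidence graph of an incidence relation `I`. -/
def IncGraph {Pt Ln : Type*} (I : Pt → Ln → Prop) : SimpleGraph (Pt ⊕ Ln) where
  Adj x y := (∃ p l, x = Sum.inl p ∧ y = Sum.inr l ∧ I p l) ∨
             (∃ p l, x = Sum.inr l ∧ y = Sum.inl p ∧ I p l)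
  symm := by
    constructor
    rintro x y (⟨p, l, hx, hy, h⟩ | ⟨p, l, hx, hy, h⟩)
    · exact Or.inr ⟨p, l, hy, hx, h⟩
    · exact Or.inl ⟨p, l, hy, hx, h⟩
  loopless := by
    constructor
    rintro x (⟨p, l, hx, hy, h⟩ | ⟨p, l, hx, hy, h⟩) <;> subst hx <;> simp_all

/-- A set of vertices is a resolving set if every vertex is determined
by its distances to the elements of `S`. -/
def IsResolvingSet {V : Type*} (G : SimpleGraph V) (S : Set V) : Prop :=
  ∀ x y : V, (∀ s ∈ S, G.dist x s = G.dist y s) → x = y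

/-- An affine plane of order `q`. -/
def IsAffinePlane {Pt Ln : Type*} (q : ℕ) (I : Pt → Ln → Prop) : Prop :=
  Nat.card Pt = q ^ 2 ∧ Nat.card Ln = q ^ 2 + q ∧
  (∀ l, {p | I p l}.ncard = q) ∧
  (∀ p, {l | I p l}.ncard = q + 1) ∧
  (∀ p₁ p₂ : Pt, p₁ ≠ p₂ → ∃! l, I p₁ l ∧ I p₂ l)

attribute [local instance] Classical.propDecidable

namespace APAux

open Finset Sum

variable {Pt Ln : Type*} [Fintype Pt] [Fintype Ln] {q : ℕ} {I : Pt → Ln → Prop}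

/-- points of a line, as a Finset -/
noncomputable def pf (I : Pt → Ln → Prop) (l : Ln) : Finset Pt :=
  Finset.univ.filter (fun p => I p l)

/-- lines through a point, as a Finset -/
noncomputable def lf (I : Pt → Ln → Prop) (p : Pt) : Finset Ln :=
  Finset.univ.filter (fun l => I p l)

@[simp] lemma mem_pf {l : Ln} {p : Pt} : p ∈ pf I l ↔ I p l := by simp [pf]
@[simp] lemma mem_lf {l : Ln} {p : Pt} : l ∈ lf I p ↔ I p l := by simp [lf]

/-- parallel (or equal) lines -/
def IsPar (I : Pt → Ln → Prop) (l m : Ln) : Prop :=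
  l = m ∨ ∀ p, ¬(I p l ∧ I p m)

lemma IsPar.refl (l : Ln) : IsPar I l l := Or.inl rfl

lemma IsPar.symm {l m : Ln} (h : IsPar I l m) : IsPar I m l := by
  rcases h with h | h
  · exact Or.inl h.symm
  · exact Or.inr fun p hp => h p ⟨hp.2, hp.1⟩

lemma not_par_iff {l m : Ln} : ¬ IsPar I l m ↔ l ≠ m ∧ ∃ p, I p l ∧ I p m := by
  unfold IsPar
  push_neg
  tauto

/-- bundled hypotheses of the problem -/
structure Plane {Pt Ln : Type*} [Fintype Pt] [Fintype Ln]
    (q : ℕ) (I : Pt → Ln → Prop) : Prop where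
  hq : 13 ≤ q
  hPt : Nat.card Pt = q ^ 2
  hl : ∀ l : Ln, {p | I p l}.ncard = q
  hp : ∀ p : Pt, {l | I p l}.ncard = q + 1
  hj : ∀ p₁ p₂ : Pt, p₁ ≠ p₂ → ∃! l, I p₁ l ∧ I p₂ l

variable (H : Plane q I)
include H

lemma card_pf (l : Ln) : (pf I l).card = q := by
  rw [pf, ← Set.toFinset_setOf, ← Set.ncard_eq_toFinset_card', H.hl l]

lemma card_lf (p : Pt) : (lf I p).card = q + 1 := by
  rw [lf, ← Set.toFinset_setOf, ← Set.ncard_eq_toFinset_card', H.hp p]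

lemma join_unique {a b : Pt} {l m : Ln} (hab : a ≠ b) (hal : I a l) (hbl : I b l)
    (ham : I a m) (hbm : I b m) : l = m := by
  obtain ⟨n, -, hu⟩ := H.hj a b hab
  rw [hu l ⟨hal, hbl⟩, hu m ⟨ham, hbm⟩]

lemma meet_unique {a b : Pt} {l m : Ln} (hlm : l ≠ m) (hal : I a l) (ham : I a m)
    (hbl : I b l) (hbm : I b m) : a = b := by
  by_contra hab
  exact hlm (join_unique H hab hal hbl ham hbm)

lemma meet_of_not_par {l m : Ln} (h : ¬ IsPar I l m) : ∃! p, I p l ∧ I p m := by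
  obtain ⟨hne, p, hp1, hp2⟩ := (not_par_iff).mp h
  exact ⟨p, ⟨hp1, hp2⟩, fun y hy => meet_unique H hne hy.1 hy.2 hp1 hp2⟩

lemma card_meets {p : Pt} {l : Ln} (hpl : ¬ I p l) :
    ((lf I p).filter (fun m => ∃ x, I x m ∧ I x l)).card = q := by
  rw [← card_pf H l]
  symm
  refine Finset.card_bij'
    (fun a ha => (H.hj p a (fun hpa => hpl (hpa ▸ (mem_pf.mp ha)))).choose)
    (fun m hm => ((Finset.mem_filter.mp hm).2).choose) ?_ ?_ ?_ ?_
  · intro a ha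
    have hne : p ≠ a := fun hpa => hpl (hpa ▸ (mem_pf.mp ha))
    obtain ⟨⟨h1, h2⟩, -⟩ := (H.hj p a hne).choose_spec
    exact Finset.mem_filter.mpr ⟨mem_lf.mpr h1, ⟨a, h2, mem_pf.mp ha⟩⟩
  · intro m hm
    obtain ⟨h1, h2⟩ := ((Finset.mem_filter.mp hm).2).choose_spec
    exact mem_pf.mpr h2
  · intro a ha
    have hne : p ≠ a := fun hpa => hpl (hpa ▸ (mem_pf.mp ha))
    obtain ⟨⟨h1, h2⟩, -⟩ := (H.hj p a hne).choose_spec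
    set n := (H.hj p a hne).choose
    have hmem : n ∈ (lf I p).filter (fun m => ∃ x, I x m ∧ I x l) :=
      Finset.mem_filter.mpr ⟨mem_lf.mpr h1, ⟨a, h2, mem_pf.mp ha⟩⟩
    obtain ⟨g1, g2⟩ := ((Finset.mem_filter.mp hmem).2).choose_spec
    have hnl : n ≠ l := fun h => hpl (h ▸ h1)
    exact meet_unique H hnl g1 g2 h2 (mem_pf.mp ha)
  · intro m hm
    obtain ⟨g1, g2⟩ := ((Finset.mem_filter.mp hm).2).choose_spec
    set x := ((Finset.mem_filter.mp hm).2).choose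
    have hne : p ≠ x := fun hpx => hpl (hpx ▸ g2)
    obtain ⟨⟨h1, h2⟩, -⟩ := (H.hj p x hne).choose_spec
    exact join_unique H hne h1 h2 (mem_lf.mp (Finset.mem_filter.mp hm).1) g1

lemma card_notmeets {p : Pt} {l : Ln} (hpl : ¬ I p l) :
    ((lf I p).filter (fun m => ¬ ∃ x, I x m ∧ I x l)).card = 1 := by
  have h := Finset.card_filter_add_card_filter_not
    (s := lf I p) (p := fun m => ∃ x, I x m ∧ I x l)
  rw [card_meets H hpl, card_lf H] at h
  omega

lemma playfair (p : Pt) (l : Ln) : ∃! m, I p m ∧ IsPar I m l := by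
  by_cases hpl : I p l
  · refine ⟨l, ⟨hpl, IsPar.refl l⟩, ?_⟩
    rintro m ⟨h1, (h2 | h2)⟩
    · exact h2
    · exact absurd ⟨h1, hpl⟩ (h2 p)
  · obtain ⟨m₀, hm₀⟩ := Finset.card_eq_one.mp (card_notmeets H hpl)
    have h₀ := Finset.mem_filter.mp (hm₀ ▸ Finset.mem_singleton_self m₀)
    refine ⟨m₀, ⟨mem_lf.mp h₀.1, ?_⟩, ?_⟩
    · right
      intro x hx
      exact h₀.2 ⟨x, hx.1, hx.2⟩
    · rintro m ⟨h1, (h2 | h2)⟩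
      · exact absurd (h2 ▸ h1) hpl
      · have : m ∈ (lf I p).filter (fun m => ¬ ∃ x, I x m ∧ I x l) :=
          Finset.mem_filter.mpr ⟨mem_lf.mpr h1, fun ⟨x, hx1, hx2⟩ => h2 x ⟨hx1, hx2⟩⟩
        exact Finset.mem_singleton.mp (hm₀ ▸ this)

lemma par_trans {a b c : Ln} (hab : IsPar I a b) (hbc : IsPar I b c) :
    IsPar I a c := by
  rcases hab with rfl | hab
  · exact hbc
  rcases hbc with rfl | hbc
  · exact Or.inr hab
  by_contra hac
  obtain ⟨hne, x, hxa, hxc⟩ := not_par_iff.mp hac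
  obtain ⟨m, -, hu⟩ := playfair H x b
  exact hne ((hu a ⟨hxa, Or.inr hab⟩).trans
    (hu c ⟨hxc, Or.inr fun p hp' => hbc p ⟨hp'.2, hp'.1⟩⟩).symm)

/-- the parallel line to `k` through `x` -/
noncomputable def cp (H : Plane q I) (k : Ln) (x : Pt) : Ln :=
  (playfair H x k).choose

lemma cp_inc (k : Ln) (x : Pt) : I x (cp H k x) :=
  (playfair H x k).choose_spec.1.1

lemma cp_par (k : Ln) (x : Pt) : IsPar I (cp H k x) k :=
  (playfair H x k).choose_spec.1.2

lemma cp_unique {k : Ln} {x : Pt} {m : Ln} (h1 : I x m) (h2 : IsPar I m k) :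
    m = cp H k x :=
  (playfair H x k).choose_spec.2 m ⟨h1, h2⟩

lemma cp_eq_self {k : Ln} {x : Pt} (h : I x k) : cp H k x = k :=
  ((playfair H x k).choose_spec.2 k ⟨h, IsPar.refl k⟩).symm

lemma card_Pt : Fintype.card Pt = q ^ 2 := by
  rw [← Nat.card_eq_fintype_card, H.hPt]

lemma pf_nonempty (l : Ln) : (pf I l).Nonempty := by
  have := H.hq
  rw [← Finset.card_pos, card_pf H l]; omega

lemma exists_off (l : Ln) : ∃ x, ¬ I x l := by
  have hq := H.hq
  by_contra h
  push_neg at h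
  have : pf I l = Finset.univ := by
    ext x; simpa [mem_pf] using h x
  have hc := card_pf H l
  rw [this, Finset.card_univ, card_Pt H] at hc
  nlinarith

lemma exists_notpar (k : Ln) : ∃ t, ¬ IsPar I t k := by
  obtain ⟨y, hy⟩ := pf_nonempty H k
  obtain ⟨x, hx⟩ := exists_off H k
  have hxy : x ≠ y := fun h => hx (h ▸ mem_pf.mp hy)
  obtain ⟨t, ⟨ht1, ht2⟩, -⟩ := H.hj x y hxy
  refine ⟨t, ?_⟩
  rw [not_par_iff]
  exact ⟨fun h => hx (h ▸ ht1), y, ht2, mem_pf.mp hy⟩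

lemma notpar_of_par_notpar {m k t : Ln} (hmk : IsPar I m k) (htk : ¬ IsPar I t k) :
    ¬ IsPar I m t := fun hmt => htk (par_trans H (IsPar.symm hmt) hmk)

lemma card_par_class (k : Ln) :
    (Finset.univ.filter (fun m => IsPar I m k)).card = q := by
  obtain ⟨t, htk⟩ := exists_notpar H k
  rw [← card_pf H t]
  refine Finset.card_bij'
    (fun m hm => (meet_of_not_par H (notpar_of_par_notpar H
      ((Finset.mem_filter.mp hm).2) htk)).choose)
    (fun x _ => cp H k x) ?_ ?_ ?_ ?_
  · intro m hm
    exact mem_pf.mpr (meet_of_not_par H (notpar_of_par_notpar H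
      ((Finset.mem_filter.mp hm).2) htk)).choose_spec.1.2
  · intro x _
    exact Finset.mem_filter.mpr ⟨Finset.mem_univ _, cp_par H k x⟩
  · intro m hm
    exact (cp_unique H (meet_of_not_par H (notpar_of_par_notpar H
      ((Finset.mem_filter.mp hm).2) htk)).choose_spec.1.1
      ((Finset.mem_filter.mp hm).2)).symm
  · intro x hx
    have hcp := notpar_of_par_notpar H (cp_par H k x) htk
    exact ((meet_of_not_par H hcp).choose_spec.2 x
      ⟨cp_inc H k x, mem_pf.mp hx⟩).symm

omit H

lemma adj_inl_inr {p : Pt} {l : Ln} : (IncGraph I).Adj (inl p) (inr l) ↔ I p l := by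
  constructor
  · rintro (⟨a, b, h1, h2, h3⟩ | ⟨a, b, h1, h2, h3⟩) <;> simp_all
  · intro h; exact Or.inl ⟨p, l, rfl, rfl, h⟩

lemma adj_inr_inl {p : Pt} {l : Ln} : (IncGraph I).Adj (inr l) (inl p) ↔ I p l := by
  constructor
  · rintro (⟨a, b, h1, h2, h3⟩ | ⟨a, b, h1, h2, h3⟩) <;> simp_all
  · intro h; exact Or.inr ⟨p, l, rfl, rfl, h⟩

lemma adj_from_inl {p : Pt} {v : Pt ⊕ Ln} (h : (IncGraph I).Adj (inl p) v) :
    ∃ l, v = inr l ∧ I p l := by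
  rcases h with ⟨a, b, h1, h2, h3⟩ | ⟨a, b, h1, h2, h3⟩ <;> simp_all

lemma adj_from_inr {l : Ln} {v : Pt ⊕ Ln} (h : (IncGraph I).Adj (inr l) v) :
    ∃ p, v = inl p ∧ I p l := by
  rcases h with ⟨a, b, h1, h2, h3⟩ | ⟨a, b, h1, h2, h3⟩ <;> simp_all

include H



lemma dist_pl_inc {p : Pt} {l : Ln} (h : I p l) :
    (IncGraph I).dist (inl p) (inr l) = 1 := by
  let w : (IncGraph I).Walk (inl p) (inr l) :=
    SimpleGraph.Walk.cons (adj_inl_inr.mpr h) SimpleGraph.Walk.nil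
  have hle : (IncGraph I).dist (inl p) (inr l) ≤ 1 := SimpleGraph.dist_le w
  have h0 : (IncGraph I).dist (inl p) (inr l) ≠ 0 := by
    simp [SimpleGraph.Reachable.dist_eq_zero_iff (⟨w⟩ : (IncGraph I).Reachable (inl p) (inr l))]
  omega

lemma dist_pp {p p' : Pt} (h : p ≠ p') :
    (IncGraph I).dist (inl p) (inl p') = 2 := by
  obtain ⟨m, ⟨h1, h2⟩, -⟩ := H.hj p p' h
  let w : (IncGraph I).Walk (inl p) (inl p') :=
    .cons (adj_inl_inr.mpr h1) (.cons (adj_inr_inl.mpr h2) .nil)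
  have hle : (IncGraph I).dist (inl p) (inl p') ≤ 2 := SimpleGraph.dist_le w
  obtain ⟨w', hw'⟩ := SimpleGraph.Reachable.exists_walk_length_eq_dist ⟨w⟩
  rcases w' with _ | ⟨ha, w''⟩
  · exact absurd rfl h
  · obtain ⟨l₁, heq, -⟩ := adj_from_inl ha
    subst heq
    rcases w'' with _ | ⟨hb, w₃⟩
    · simp only [SimpleGraph.Walk.length_cons] at hw'
      omega

lemma dist_pl_not {p : Pt} {l : Ln} (h : ¬ I p l) :
    (IncGraph I).dist (inl p) (inr l) = 3 := by
  obtain ⟨x, hx⟩ := pf_nonempty H l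
  have hx' := mem_pf.mp hx
  have hne : p ≠ x := fun he => h (he ▸ hx')
  obtain ⟨m, ⟨h1, h2⟩, -⟩ := H.hj p x hne
  let w : (IncGraph I).Walk (inl p) (inr l) :=
    .cons (adj_inl_inr.mpr h1) (.cons (adj_inr_inl.mpr h2) (.cons (adj_inl_inr.mpr hx') .nil))
  have hle : (IncGraph I).dist (inl p) (inr l) ≤ 3 := SimpleGraph.dist_le w
  obtain ⟨w', hw'⟩ := SimpleGraph.Reachable.exists_walk_length_eq_dist ⟨w⟩
  rcases w' with _ | ⟨ha, w''⟩
  obtain ⟨b, heq, hb⟩ := adj_from_inl ha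
  subst heq
  have hbl : b ≠ l := fun he => h (he ▸ hb)
  rcases w'' with _ | ⟨hc, w₃⟩
  · exact absurd rfl hbl
  · obtain ⟨c, heq, hc'⟩ := adj_from_inr hc
    subst heq
    rcases w₃ with _ | ⟨hd, w₄⟩
    simp only [SimpleGraph.Walk.length_cons] at hw'
    omega

lemma dist_ll_meet {l l' : Ln} (hne : l ≠ l') {x : Pt} (hx : I x l) (hx' : I x l') :
    (IncGraph I).dist (inr l) (inr l') = 2 := by
  let w : (IncGraph I).Walk (inr l) (inr l') :=
    .cons (adj_inr_inl.mpr hx) (.cons (adj_inl_inr.mpr hx') .nil)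
  have hle : (IncGraph I).dist (inr l) (inr l') ≤ 2 := SimpleGraph.dist_le w
  obtain ⟨w', hw'⟩ := SimpleGraph.Reachable.exists_walk_length_eq_dist ⟨w⟩
  rcases w' with _ | ⟨ha, w''⟩
  · exact absurd rfl hne
  · obtain ⟨a, heq, -⟩ := adj_from_inr ha
    subst heq
    rcases w'' with _ | ⟨hb, w₃⟩
    simp only [SimpleGraph.Walk.length_cons] at hw'
    omega

lemma dist_ll_disj {l l' : Ln} (hne : l ≠ l') (hdis : ∀ x, ¬ (I x l ∧ I x l')) :
    (IncGraph I).dist (inr l) (inr l') = 4 := by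
  obtain ⟨x, hx⟩ := pf_nonempty H l
  have hx' := mem_pf.mp hx
  have hxl' : ¬ I x l' := fun hcon => hdis x ⟨hx', hcon⟩
  have hcm : ((lf I x).filter (fun m => ∃ y, I y m ∧ I y l')).Nonempty := by
    have := H.hq
    rw [← Finset.card_pos, card_meets H hxl']
    omega
  obtain ⟨m, hm⟩ := hcm
  obtain ⟨hm1, y, hy1, hy2⟩ := Finset.mem_filter.mp hm
  let w : (IncGraph I).Walk (inr l) (inr l') :=
    .cons (adj_inr_inl.mpr hx') (.cons (adj_inl_inr.mpr (mem_lf.mp hm1))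
      (.cons (adj_inr_inl.mpr hy1) (.cons (adj_inl_inr.mpr hy2) .nil)))
  have hle : (IncGraph I).dist (inr l) (inr l') ≤ 4 := SimpleGraph.dist_le w
  obtain ⟨w', hw'⟩ := SimpleGraph.Reachable.exists_walk_length_eq_dist ⟨w⟩
  rcases w' with _ | ⟨ha, w''⟩
  · exact absurd rfl hne
  · obtain ⟨a, heq, ha'⟩ := adj_from_inr ha
    subst heq
    rcases w'' with _ | ⟨hb, w₃⟩
    obtain ⟨b, heq, hb'⟩ := adj_from_inl hb
    subst heq
    have hbl : b ≠ l' := fun he => hdis a ⟨ha', he ▸ hb'⟩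
    rcases w₃ with _ | ⟨hc, w₄⟩
    · exact absurd rfl hbl
    · obtain ⟨c, heq, -⟩ := adj_from_inr hc
      subst heq
      rcases w₄ with _ | ⟨hd, w₅⟩
      simp only [SimpleGraph.Walk.length_cons] at hw'
      omega

/-- the candidate resolving set determined by a finset of points and lines -/
noncomputable def SV (Pf : Finset Pt) (Lf : Finset Ln) : Finset (Pt ⊕ Ln) :=
  Pf.image inl ∪ Lf.image inr

omit H

lemma mem_SV_inl {Pf : Finset Pt} {Lf : Finset Ln} {p : Pt} :
    inl p ∈ SV Pf Lf ↔ p ∈ Pf := by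
  simp [SV]

lemma mem_SV_inr {Pf : Finset Pt} {Lf : Finset Ln} {l : Ln} :
    inr l ∈ SV Pf Lf ↔ l ∈ Lf := by
  simp [SV]

lemma card_SV (Pf : Finset Pt) (Lf : Finset Ln) :
    (SV Pf Lf).card = Pf.card + Lf.card := by
  rw [SV, Finset.card_union_of_disjoint, Finset.card_image_of_injective _ inl_injective,
    Finset.card_image_of_injective _ inr_injective]
  simp [Finset.disjoint_left]

include H

lemma dist_point_ne_dist_line (a : Pt) (b : Ln) (s : Pt ⊕ Ln) :
    (IncGraph I).dist (inl a) s ≠ (IncGraph I).dist (inr b) s := by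
  rcases s with z | lz
  · have h2 : (IncGraph I).dist (inr b) (inl z) =
        (IncGraph I).dist (inl z) (inr b) := SimpleGraph.dist_comm
    by_cases hI : I z b
    · rw [h2, dist_pl_inc H hI]
      rcases eq_or_ne a z with rfl | haz
      · rw [SimpleGraph.dist_self]; omega
      · rw [dist_pp H haz]; omega
    · rw [h2, dist_pl_not H hI]
      rcases eq_or_ne a z with rfl | haz
      · rw [SimpleGraph.dist_self]; omega
      · rw [dist_pp H haz]; omega
  · by_cases hI : I a lz
    · rw [dist_pl_inc H hI]
      rcases eq_or_ne b lz with rfl | hbz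
      · rw [SimpleGraph.dist_self]; omega
      · by_cases hpar : IsPar I b lz
        · rw [dist_ll_disj H hbz (by rcases hpar with h | h; exact absurd h hbz; exact h)]
          omega
        · obtain ⟨x, hx, -⟩ := meet_of_not_par H hpar
          rw [dist_ll_meet H hbz hx.1 hx.2]; omega
    · rw [dist_pl_not H hI]
      rcases eq_or_ne b lz with rfl | hbz
      · rw [SimpleGraph.dist_self]; omega
      · by_cases hpar : IsPar I b lz
        · rw [dist_ll_disj H hbz (by rcases hpar with h | h; exact absurd h hbz; exact h)]
          omega
        · obtain ⟨x, hx, -⟩ := meet_of_not_par H hpar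
          rw [dist_ll_meet H hbz hx.1 hx.2]; omega

/-- sufficient conditions for a resolving set -/
lemma resolving_of {Pf : Finset Pt} {Lf : Finset Ln} (hne : (SV Pf Lf).Nonempty)
    (hA : ∀ x y : Pt, x ∉ Pf → y ∉ Pf → (∀ l ∈ Lf, I x l ↔ I y l) → x = y)
    (hB : ∀ m m' : Ln, m ∉ Lf → m' ∉ Lf → (∀ z ∈ Pf, I z m ↔ I z m') →
      (∀ l ∈ Lf, IsPar I l m ↔ IsPar I l m') → m = m') :
    IsResolvingSet (IncGraph I) (↑(SV Pf Lf) : Set (Pt ⊕ Ln)) := by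
  intro x y hd
  have hd' : ∀ s ∈ SV Pf Lf, (IncGraph I).dist x s = (IncGraph I).dist y s := by
    intro s hs; exact hd s (by exact_mod_cast hs)
  obtain ⟨s₀, hs₀⟩ := hne
  rcases x with a | m <;> rcases y with a' | m'
  · -- point, point
    by_cases hxP : a ∈ Pf
    · have h := hd' (inl a) (mem_SV_inl.mpr hxP)
      rw [SimpleGraph.dist_self] at h
      rcases eq_or_ne a' a with rfl | hne'
      · rfl
      · rw [dist_pp H hne'] at h; omega
    · by_cases hyP : a' ∈ Pf
      · have h := hd' (inl a') (mem_SV_inl.mpr hyP)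
        rw [SimpleGraph.dist_self] at h
        rcases eq_or_ne a a' with rfl | hne'
        · rfl
        · rw [dist_pp H hne'] at h; omega
      · have key : ∀ l ∈ Lf, I a l ↔ I a' l := by
          intro l hlf
          have h := hd' (inr l) (mem_SV_inr.mpr hlf)
          by_cases h1 : I a l <;> by_cases h2 : I a' l
          · exact iff_of_true h1 h2
          · rw [dist_pl_inc H h1, dist_pl_not H h2] at h; omega
          · rw [dist_pl_not H h1, dist_pl_inc H h2] at h; omega
          · exact iff_of_false h1 h2
        rw [hA a a' hxP hyP key]
  · exact absurd (hd' s₀ hs₀) (dist_point_ne_dist_line H a m' s₀)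
  · exact absurd (hd' s₀ hs₀).symm (dist_point_ne_dist_line H a' m s₀)
  · -- line, line
    by_cases hxL : m ∈ Lf
    · have h := hd' (inr m) (mem_SV_inr.mpr hxL)
      rw [SimpleGraph.dist_self] at h
      rcases eq_or_ne m' m with rfl | hne'
      · rfl
      · by_cases hpar : IsPar I m' m
        · rw [dist_ll_disj H hne'
            (by rcases hpar with hc | hc; exact absurd hc hne'; exact hc)] at h
          omega
        · obtain ⟨z, hz, -⟩ := meet_of_not_par H hpar
          rw [dist_ll_meet H hne' hz.1 hz.2] at h; omega
    · by_cases hyL : m' ∈ Lf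
      · have h := hd' (inr m') (mem_SV_inr.mpr hyL)
        rw [SimpleGraph.dist_self] at h
        rcases eq_or_ne m m' with rfl | hne'
        · rfl
        · by_cases hpar : IsPar I m m'
          · rw [dist_ll_disj H hne'
              (by rcases hpar with hc | hc; exact absurd hc hne'; exact hc)] at h
            omega
          · obtain ⟨z, hz, -⟩ := meet_of_not_par H hpar
            rw [dist_ll_meet H hne' hz.1 hz.2] at h; omega
      · have key1 : ∀ z ∈ Pf, I z m ↔ I z m' := by
          intro z hzP
          have h := hd' (inl z) (mem_SV_inl.mpr hzP)
          rw [SimpleGraph.dist_comm (u := inr m), SimpleGraph.dist_comm (u := inr m')] at h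
          by_cases h1 : I z m <;> by_cases h2 : I z m'
          · exact iff_of_true h1 h2
          · rw [dist_pl_inc H h1, dist_pl_not H h2] at h; omega
          · rw [dist_pl_not H h1, dist_pl_inc H h2] at h; omega
          · exact iff_of_false h1 h2
        have key2 : ∀ l ∈ Lf, IsPar I l m ↔ IsPar I l m' := by
          intro l hlf
          have h := hd' (inr l) (mem_SV_inr.mpr hlf)
          have hml : m ≠ l := fun he => hxL (he ▸ hlf)
          have hm'l : m' ≠ l := fun he => hyL (he ▸ hlf)
          have dval : ∀ n : Ln, n ≠ l → ((IncGraph I).dist (inr n) (inr l) = 4 ↔ IsPar I l n)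
              ∧ ((IncGraph I).dist (inr n) (inr l) = 2 ↔ ¬ IsPar I l n) := by
            intro n hnl
            by_cases hpar : IsPar I l n
            · rw [dist_ll_disj H hnl (by
                rcases (IsPar.symm hpar) with hc | hc
                · exact absurd hc hnl
                · exact hc)]
              constructor
              · exact ⟨fun _ => hpar, fun _ => rfl⟩
              · exact ⟨fun hc => by omega, fun hc => absurd hpar hc⟩
            · obtain ⟨z, hz, -⟩ := meet_of_not_par H (fun hc => hpar (IsPar.symm hc))
              rw [dist_ll_meet H hnl hz.1 hz.2]
              constructor
              · exact ⟨fun hc => by omega, fun hc => absurd hc hpar⟩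
              · exact ⟨fun _ => hpar, fun _ => rfl⟩
          by_cases h1 : IsPar I l m <;> by_cases h2 : IsPar I l m'
          · exact iff_of_true h1 h2
          · have d1 := (dval m hml).1.mpr h1
            have d2 := (dval m' hm'l).2.mpr h2
            omega
          · have d1 := (dval m hml).2.mpr h1
            have d2 := (dval m' hm'l).1.mpr h2
            omega
          · exact iff_of_false h1 h2
        rw [hB m m' hxL hyL key1 key2]

/-- necessary condition (A): lines of the set separate points outside the set -/
lemma resolving_A {Pf : Finset Pt} {Lf : Finset Ln}
    (hres : IsResolvingSet (IncGraph I) (↑(SV Pf Lf) : Set (Pt ⊕ Ln)))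
    {x y : Pt} (hx : x ∉ Pf) (hy : y ∉ Pf) (hiff : ∀ l ∈ Lf, I x l ↔ I y l) :
    x = y := by
  have := hres (inl x) (inl y) ?_
  · exact inl_injective this
  intro s hs
  have hs' : s ∈ SV Pf Lf := by exact_mod_cast hs
  rcases s with z | lz
  · have hzP := mem_SV_inl.mp hs'
    have hzx : x ≠ z := fun he => hx (he ▸ hzP)
    have hzy : y ≠ z := fun he => hy (he ▸ hzP)
    rw [dist_pp H hzx, dist_pp H hzy]
  · have hzL := mem_SV_inr.mp hs'
    by_cases h1 : I x lz
    · rw [dist_pl_inc H h1, dist_pl_inc H ((hiff lz hzL).mp h1)]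
    · rw [dist_pl_not H h1, dist_pl_not H (fun hc => h1 ((hiff lz hzL).mpr hc))]

/-- necessary condition: at most one line of each parallel class is missed -/
lemma resolving_par {Pf : Finset Pt} {Lf : Finset Ln}
    (hres : IsResolvingSet (IncGraph I) (↑(SV Pf Lf) : Set (Pt ⊕ Ln)))
    {m m' : Ln} (hm : m ∉ Lf) (hm' : m' ∉ Lf) (hpar : IsPar I m m')
    (hPm : ∀ z ∈ Pf, ¬ I z m) (hPm' : ∀ z ∈ Pf, ¬ I z m') : m = m' := by
  rcases eq_or_ne m m' with rfl | hne
  · rfl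
  have := hres (inr m) (inr m') ?_
  · exact inr_injective this
  intro s hs
  have hs' : s ∈ SV Pf Lf := by exact_mod_cast hs
  rcases s with z | lz
  · have hzP := mem_SV_inl.mp hs'
    rw [SimpleGraph.dist_comm (u := inr m), SimpleGraph.dist_comm (u := inr m')]
    rw [dist_pl_not H (hPm z hzP), dist_pl_not H (hPm' z hzP)]
  · have hzL := mem_SV_inr.mp hs'
    have hml : m ≠ lz := fun he => hm (he ▸ hzL)
    have hm'l : m' ≠ lz := fun he => hm' (he ▸ hzL)
    by_cases hp1 : IsPar I m lz
    · have hp2 : IsPar I m' lz := par_trans H (IsPar.symm hpar) hp1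
      rw [dist_ll_disj H hml (by rcases hp1 with hc | hc; exact absurd hc hml; exact hc),
        dist_ll_disj H hm'l (by rcases hp2 with hc | hc; exact absurd hc hm'l; exact hc)]
    · have hp2 : ¬ IsPar I m' lz := fun hc => hp1 (par_trans H hpar hc)
      obtain ⟨z1, hz1, -⟩ := meet_of_not_par H hp1
      obtain ⟨z2, hz2, -⟩ := meet_of_not_par H hp2
      rw [dist_ll_meet H hml hz1.1 hz1.2, dist_ll_meet H hm'l hz2.1 hz2.2]

lemma exists_upper : ∃ S : Set (Pt ⊕ Ln),
    IsResolvingSet (IncGraph I) S ∧ S.ncard = 3 * q - 4 := by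
  have hq := H.hq
  -- a point z
  have hPtne : Nonempty Pt := by
    apply Fintype.card_pos_iff.mp
    rw [card_Pt H]
    nlinarith
  obtain ⟨z⟩ := hPtne
  -- two lines through z
  have h2 : 1 < (lf I z).card := by rw [card_lf H]; omega
  obtain ⟨t, ht, h₀, hh₀, hth₀⟩ := Finset.one_lt_card.mp h2
  have hzt : I z t := mem_lf.mp ht
  have hzh₀ : I z h₀ := mem_lf.mp hh₀
  -- a second line parallel to t
  have h2' : 1 < (Finset.univ.filter (fun m => IsPar I m t)).card := by
    rw [card_par_class H t]; omega
  obtain ⟨m1, hm1, m2, hm2, hm12⟩ := Finset.one_lt_card.mp h2'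
  have hex_t' : ∃ t', IsPar I t' t ∧ t' ≠ t := by
    rcases eq_or_ne m1 t with rfl | hne1
    · exact ⟨m2, (Finset.mem_filter.mp hm2).2, fun he => hm12 he.symm⟩
    · exact ⟨m1, (Finset.mem_filter.mp hm1).2, hne1⟩
  obtain ⟨t', ht'par, ht'ne⟩ := hex_t'
  have hznt' : ¬ I z t' := by
    rcases ht'par with he | hd
    · exact absurd he ht'ne
    · exact fun hc => hd z ⟨hc, hzt⟩
  have hnp_h₀t : ¬ IsPar I h₀ t := by
    rw [not_par_iff]
    exact ⟨fun he => hth₀ he.symm, z, hzh₀, hzt⟩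
  have hnp_th₀ : ¬ IsPar I t h₀ := fun hc => hnp_h₀t (IsPar.symm hc)
  have hnp_t'h₀ : ¬ IsPar I t' h₀ := fun hc => hnp_th₀ (par_trans H (IsPar.symm ht'par) hc)
  have ht'h₀ : t' ≠ h₀ := fun he => hnp_t'h₀ (he ▸ IsPar.refl t')
  -- the sets
  set Pf : Finset Pt := (pf I t).erase z with hPf
  set Tpart : Finset Ln := ((Finset.univ.filter (fun m => IsPar I m t)).erase t).erase t'
    with hTpart
  set Rpart : Finset Ln := ((lf I z).erase h₀).erase t with hRpart
  set Lf : Finset Ln := Tpart ∪ Rpart with hLf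
  -- membership characterizations
  have memT : ∀ l, l ∈ Tpart ↔ IsPar I l t ∧ l ≠ t ∧ l ≠ t' := by
    intro l
    simp only [hTpart, Finset.mem_erase, Finset.mem_filter, Finset.mem_univ, true_and]
    tauto
  have memR : ∀ l, l ∈ Rpart ↔ I z l ∧ l ≠ h₀ ∧ l ≠ t := by
    intro l
    simp only [hRpart, Finset.mem_erase, mem_lf]
    tauto
  have memLf : ∀ l, l ∈ Lf ↔ (IsPar I l t ∧ l ≠ t ∧ l ≠ t') ∨ (I z l ∧ l ≠ h₀ ∧ l ≠ t) := by
    intro l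
    rw [hLf, Finset.mem_union, memT, memR]
  have memPf : ∀ x, x ∈ Pf ↔ x ≠ z ∧ I x t := by
    intro x
    simp only [hPf, Finset.mem_erase, mem_pf]
  have notPf : ∀ x, x ∉ Pf → x ≠ z → ¬ I x t := by
    intro x hx hxz hc
    exact hx ((memPf x).mpr ⟨hxz, hc⟩)
  -- z is on no line of Lf? (not needed globally)
  -- cardinalities
  have cPf : Pf.card = q - 1 := by
    rw [hPf, Finset.card_erase_of_mem (mem_pf.mpr hzt), card_pf H]
  have cT : Tpart.card = q - 2 := by
    have h1 : t' ∈ (Finset.univ.filter (fun m => IsPar I m t)).erase t :=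
      Finset.mem_erase.mpr ⟨ht'ne, Finset.mem_filter.mpr ⟨Finset.mem_univ _, ht'par⟩⟩
    have hh2 : t ∈ Finset.univ.filter (fun m => IsPar I m t) :=
      Finset.mem_filter.mpr ⟨Finset.mem_univ _, IsPar.refl t⟩
    rw [hTpart, Finset.card_erase_of_mem h1, Finset.card_erase_of_mem hh2,
      card_par_class H t]
    omega
  have cR : Rpart.card = q - 1 := by
    have h1 : t ∈ (lf I z).erase h₀ := Finset.mem_erase.mpr ⟨hth₀, ht⟩
    rw [hRpart, Finset.card_erase_of_mem h1, Finset.card_erase_of_mem hh₀, card_lf H]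
    omega
  have hdisj : Disjoint Tpart Rpart := by
    rw [Finset.disjoint_left]
    intro l hlT hlR
    obtain ⟨hp, hnt, -⟩ := (memT l).mp hlT
    obtain ⟨hzl, -, -⟩ := (memR l).mp hlR
    rcases hp with he | hd
    · exact hnt he
    · exact hd z ⟨hzl, hzt⟩
  have cLf : Lf.card = 2 * q - 3 := by
    rw [hLf, Finset.card_union_of_disjoint hdisj, cT, cR]; omega
  -- nonempty
  have hPfne : Pf.Nonempty := by rw [← Finset.card_pos, cPf]; omega
  obtain ⟨x₀, hx₀⟩ := hPfne
  have hne : (SV Pf Lf).Nonempty := ⟨inl x₀, mem_SV_inl.mpr hx₀⟩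
  -- condition (A)
  have hA : ∀ x y : Pt, x ∉ Pf → y ∉ Pf → (∀ l ∈ Lf, I x l ↔ I y l) → x = y := by
    have zcase : ∀ y : Pt, (∀ l ∈ Lf, I z l ↔ I y l) → z = y := by
      intro y hiff
      have h2R : 1 < Rpart.card := by rw [cR]; omega
      obtain ⟨r₁, hr₁, r₂, hr₂, hr12⟩ := Finset.one_lt_card.mp h2R
      have e₁ := (memR r₁).mp hr₁
      have e₂ := (memR r₂).mp hr₂
      have hy₁ : I y r₁ := (hiff r₁ (Finset.mem_union_right _ hr₁)).mp e₁.1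
      have hy₂ : I y r₂ := (hiff r₂ (Finset.mem_union_right _ hr₂)).mp e₂.1
      exact meet_unique H hr12 e₁.1 e₂.1 hy₁ hy₂
    -- generic point: two lines of Lf through it
    have G : ∀ u v : Pt, u ≠ z → ¬ I u t → ¬ I u t' → ¬ I u h₀ →
        (∀ l ∈ Lf, I u l ↔ I v l) → u = v := by
      intro u v huz hut hut' huh hiff
      set l₁ := cp H t u with hl₁
      obtain ⟨l₂, ⟨hul₂, hzl₂⟩, -⟩ := H.hj u z huz
      have hl₁mem : l₁ ∈ Lf := by
        rw [memLf]
        refine Or.inl ⟨cp_par H t u, fun he => hut (by rw [← he]; exact cp_inc H t u), 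
          fun he => hut' (by rw [← he]; exact cp_inc H t u)⟩
      have hl₂mem : l₂ ∈ Lf := by
        rw [memLf]
        exact Or.inr ⟨hzl₂, fun he => huh (he ▸ hul₂), fun he => hut (he ▸ hul₂)⟩
      have hne12 : l₁ ≠ l₂ := by
        intro he
        have hz1 : I z l₁ := he ▸ hzl₂
        rcases cp_par H t u with hee | hd
        · exact hut (hee ▸ cp_inc H t u)
        · exact hd z ⟨hz1, hzt⟩
      have hv₁ : I v l₁ := (hiff l₁ hl₁mem).mp (cp_inc H t u)
      have hv₂ : I v l₂ := (hiff l₂ hl₂mem).mp hul₂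
      exact meet_unique H hne12 (cp_inc H t u) hul₂ hv₁ hv₂
    have T : ∀ u v : Pt, u ≠ z → ¬ I u t → ¬ I u h₀ → I u t' → I v t' →
        (∀ l ∈ Lf, I u l ↔ I v l) → u = v := by
      intro u v huz hut huh hut' hvt' hiff
      obtain ⟨l, ⟨hul, hzl⟩, -⟩ := H.hj u z huz
      have hlmem : l ∈ Lf := by
        rw [memLf]
        exact Or.inr ⟨hzl, fun he => huh (he ▸ hul), fun he => hut (he ▸ hul)⟩
      have hvl : I v l := (hiff l hlmem).mp hul
      by_contra huv
      have : l = t' := join_unique H huv hul hvl hut' hvt'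
      exact hznt' (this ▸ hzl)
    have Hf : ∀ u v : Pt, u ≠ z → ¬ I u t → I u h₀ → ¬ I u t' → I v t' →
        (∀ l ∈ Lf, I u l ↔ I v l) → False := by
      intro u v huz hut huh hut' hvt' hiff
      set l := cp H t u with hl
      have hlmem : l ∈ Lf := by
        rw [memLf]
        exact Or.inl ⟨cp_par H t u, fun he => hut (by rw [← he]; exact cp_inc H t u),
          fun he => hut' (by rw [← he]; exact cp_inc H t u)⟩
      have hvl : I v l := (hiff l hlmem).mp (cp_inc H t u)
      have h1 : l = cp H t v := cp_unique H hvl (cp_par H t u)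
      have h2 : t' = cp H t v := cp_unique H hvt' ht'par
      exact (fun he => hut' (by rw [← he]; exact cp_inc H t u)) (h1.trans h2.symm)
    have HH : ∀ u v : Pt, u ≠ z → ¬ I u t → I u h₀ → ¬ I u t' → I v h₀ →
        (∀ l ∈ Lf, I u l ↔ I v l) → u = v := by
      intro u v huz hut huh hut' hvh hiff
      set l := cp H t u with hl
      have hlmem : l ∈ Lf := by
        rw [memLf]
        exact Or.inl ⟨cp_par H t u, fun he => hut (by rw [← he]; exact cp_inc H t u),
          fun he => hut' (by rw [← he]; exact cp_inc H t u)⟩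
      have hvl : I v l := (hiff l hlmem).mp (cp_inc H t u)
      by_contra huv
      have : l = h₀ := join_unique H huv (cp_inc H t u) hvl huh hvh
      exact hnp_h₀t (this ▸ cp_par H t u)
    intro x y hx hy hiff
    rcases eq_or_ne x z with rfl | hxz
    · exact zcase y hiff
    rcases eq_or_ne y z with rfl | hyz
    · exact (zcase x (fun l hl => (hiff l hl).symm)).symm
    have hxnt : ¬ I x t := notPf x hx hxz
    have hynt : ¬ I y t := notPf y hy hyz
    have hiff' : ∀ l ∈ Lf, I y l ↔ I x l := fun l hl => (hiff l hl).symm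
    by_cases hxt' : I x t'
    · by_cases hyt' : I y t'
      · by_cases hxh : I x h₀
        · by_cases hyh : I y h₀
          · exact meet_unique H ht'h₀ hxt' hxh hyt' hyh
          · exact (T y x hyz hynt hyh hyt' hxt' hiff').symm
        · exact T x y hxz hxnt hxh hxt' hyt' hiff
      · -- y not on t' : y must be on h₀, else generic
        by_cases hyh : I y h₀
        · exact (Hf y x hyz hynt hyh hyt' hxt' hiff').elim
        · exact (G y x hyz hynt hyt' hyh hiff').symm
    · by_cases hxh : I x h₀
      · by_cases hyt' : I y t'
        · exact (Hf x y hxz hxnt hxh hxt' hyt' hiff).elim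
        · by_cases hyh : I y h₀
          · exact HH x y hxz hxnt hxh hxt' hyh hiff
          · exact (G y x hyz hynt hyt' hyh hiff').symm
      · exact G x y hxz hxnt hxt' hxh hiff
  -- condition (B)
  have hB : ∀ m m' : Ln, m ∉ Lf → m' ∉ Lf → (∀ w ∈ Pf, I w m ↔ I w m') →
      (∀ l ∈ Lf, IsPar I l m ↔ IsPar I l m') → m = m' := by
    have notLf_par_t : ∀ m, m ∉ Lf → IsPar I m t → m = t ∨ m = t' := by
      intro m hm hpar
      by_contra hc
      push_neg at hc
      exact hm ((memLf m).mpr (Or.inl ⟨hpar, hc.1, hc.2⟩))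
    have znotin : ∀ m, m ∉ Lf → cp H m z ≠ t → cp H m z ≠ h₀ → ¬ I z m := by
      intro m hm hrt hrh hzm
      have : cp H m z = m := cp_eq_self H hzm
      apply hm
      rw [memLf]
      exact Or.inr ⟨this ▸ cp_inc H m z, this ▸ hrh, this ▸ hrt⟩
    -- a point of Pf on a line not through z and not parallel to t
    have meetPf : ∀ m : Ln, ¬ I z m → ¬ IsPar I m t → ∃ x ∈ Pf, I x m := by
      intro m hzm hmt
      obtain ⟨x, ⟨hxm, hxt⟩, -⟩ := meet_of_not_par H hmt
      refine ⟨x, (memPf x).mpr ⟨fun he => hzm (he ▸ hxm), hxt⟩, hxm⟩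
    intro m m' hm hm' htr hprof
    by_cases hpp : IsPar I m m'
    · -- parallel case
      rcases eq_or_ne m m' with rfl | hne'
      · rfl
      have hdmm : ∀ x, ¬ (I x m ∧ I x m') := by
        rcases hpp with he | hd
        · exact absurd he hne'
        · exact hd
      exfalso
      set r := cp H m z with hr
      rcases eq_or_ne r t with hrt | hrt
      · -- both m, m' in the class of t
        have hmt : IsPar I m t := hrt ▸ (IsPar.symm (cp_par H m z))
        have hm't : IsPar I m' t := par_trans H (IsPar.symm hpp) hmt
        have e1 := notLf_par_t m hm hmt
        have e2 := notLf_par_t m' hm' hm't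
        have hx₀t : I x₀ t := ((memPf x₀).mp hx₀).2
        have hx₀z : x₀ ≠ z := ((memPf x₀).mp hx₀).1
        have hx₀nt' : ¬ I x₀ t' := by
          intro hc
          rcases ht'par with he | hd
          · exact ht'ne he
          · exact hd x₀ ⟨hc, hx₀t⟩
        rcases e1 with rfl | rfl <;> rcases e2 with rfl | rfl
        · exact hne' rfl
        · exact hx₀nt' ((htr x₀ hx₀).mp hx₀t)
        · exact hx₀nt' ((htr x₀ hx₀).mpr hx₀t)
        · exact hne' rfl
      rcases eq_or_ne r h₀ with hrh | hrh
      · -- both parallel to h₀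
        have hmh : IsPar I m h₀ := hrh ▸ (IsPar.symm (cp_par H m z))
        have hm'h : IsPar I m' h₀ := par_trans H (IsPar.symm hpp) hmh
        rcases eq_or_ne m h₀ with rfl | hmneh
        · -- m = h₀, work with m'
          have hm'ne : m' ≠ m := fun he => hne' he.symm
          have hzm' : ¬ I z m' := by
            rcases hm'h with he | hd
            · exact absurd he hm'ne
            · exact fun hc => hd z ⟨hc, hzh₀⟩
          have hm'nt : ¬ IsPar I m' t := fun hc =>
            hnp_th₀ (par_trans H (IsPar.symm hc) hm'h)
          obtain ⟨x, hxPf, hxm'⟩ := meetPf m' hzm' hm'nt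
          have hxm : I x m := (htr x hxPf).mpr hxm'
          -- x on h₀ and t: x = z, contradiction
          have hxt : I x t := ((memPf x).mp hxPf).2
          have : x = z := meet_unique H (fun he => hth₀ he) hxt hxm hzt hzh₀
          exact ((memPf x).mp hxPf).1 this
        · have hzm : ¬ I z m := by
            rcases hmh with he | hd
            · exact absurd he hmneh
            · exact fun hc => hd z ⟨hc, hzh₀⟩
          have hmnt : ¬ IsPar I m t := fun hc =>
            hnp_th₀ (par_trans H (IsPar.symm hc) hmh)
          obtain ⟨x, hxPf, hxm⟩ := meetPf m hzm hmnt
          have hxm' : I x m' := (htr x hxPf).mp hxm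
          exact hdmm x ⟨hxm, hxm'⟩
      · -- r is in Rpart: z not on m, use trace
        have hzm : ¬ I z m := znotin m hm hrt hrh
        have hmnt : ¬ IsPar I m t := by
          intro hc
          exact hrt (cp_unique H hzt (IsPar.symm hc)).symm
        obtain ⟨x, hxPf, hxm⟩ := meetPf m hzm hmnt
        have hxm' : I x m' := (htr x hxPf).mp hxm
        exact hdmm x ⟨hxm, hxm'⟩
    · -- non-parallel case: use the parallel profile
      exfalso
      set r := cp H m z with hr
      set r' := cp H m' z with hr'
      have hrr' : r ≠ r' := by
        intro he
        apply hpp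
        have h1 : IsPar I r m' := by rw [he]; exact cp_par H m' z
        exact par_trans H (IsPar.symm (cp_par H m z)) h1
      have keyR : ∀ n n' : Ln, ¬ IsPar I n n' → cp H n z ≠ t → cp H n z ≠ h₀ →
          (∀ l ∈ Lf, IsPar I l n ↔ IsPar I l n') → False := by
        intro n n' hnn hnt hnh hprofn
        have hmemR : cp H n z ∈ Lf := by
          rw [memLf]
          exact Or.inr ⟨cp_inc H n z, hnh, hnt⟩
        have h1 : IsPar I (cp H n z) n := cp_par H n z
        have h2 : IsPar I (cp H n z) n' := (hprofn _ hmemR).mp h1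
        have : cp H n z = cp H n' z := cp_unique H (cp_inc H n z) h2
        exact hnn (par_trans H (IsPar.symm h1) (by rw [this]; exact cp_par H n' z))
      rcases eq_or_ne r t with hrt | hrt
      · rcases eq_or_ne r' t with hr't | hr't
        · exact hrr' (hrt.trans hr't.symm)
        · rcases eq_or_ne r' h₀ with hr'h | hr'h
          · -- r = t, r' = h₀ : m in class of t; use a line of Tpart
            have hmt : IsPar I m t := hrt ▸ (IsPar.symm (cp_par H m z))
            have hTne : Tpart.Nonempty := by rw [← Finset.card_pos, cT]; omega
            obtain ⟨l₀, hl₀⟩ := hTne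
            obtain ⟨hl₀p, hl₀t, hl₀t'⟩ := (memT l₀).mp hl₀
            have hpl₀m : IsPar I l₀ m := par_trans H hl₀p (IsPar.symm hmt)
            have hpl₀m' : IsPar I l₀ m' := (hprof l₀ (Finset.mem_union_left _ hl₀)).mp hpl₀m
            have : IsPar I m' t := par_trans H (IsPar.symm hpl₀m') hl₀p
            have he : t = r' := cp_unique H hzt (IsPar.symm this)
            exact hr't (he.symm)
          · exact keyR m' m (fun hc => hpp (IsPar.symm hc)) hr't hr'h
              (fun l hl => (hprof l hl).symm)
      · rcases eq_or_ne r h₀ with hrh | hrh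
        · rcases eq_or_ne r' t with hr't | hr't
          · -- r' = t, r = h₀ : symmetric
            have hmt : IsPar I m' t := hr't ▸ (IsPar.symm (cp_par H m' z))
            have hTne : Tpart.Nonempty := by rw [← Finset.card_pos, cT]; omega
            obtain ⟨l₀, hl₀⟩ := hTne
            obtain ⟨hl₀p, hl₀t, hl₀t'⟩ := (memT l₀).mp hl₀
            have hpl₀m' : IsPar I l₀ m' := par_trans H hl₀p (IsPar.symm hmt)
            have hpl₀m : IsPar I l₀ m := (hprof l₀ (Finset.mem_union_left _ hl₀)).mpr hpl₀m'
            have : IsPar I m t := par_trans H (IsPar.symm hpl₀m) hl₀p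
            have he : t = r := cp_unique H hzt (IsPar.symm this)
            exact hrt (he.symm)
          · exact keyR m' m (fun hc => hpp (IsPar.symm hc)) hr't
              (fun hc => hrr' (hrh.trans hc.symm))
              (fun l hl => (hprof l hl).symm)
        · exact keyR m m' hpp hrt hrh hprof
  refine ⟨(↑(SV Pf Lf) : Set (Pt ⊕ Ln)), resolving_of H hne hA hB, ?_⟩
  rw [Set.ncard_coe_finset, card_SV, cPf, cLf]
  omega

/-- generic double counting -/
lemma dcount {α β : Type*} (A : Finset α) (Bf : Finset β) (r : α → β → Prop) :
    ∑ a ∈ A, (Bf.filter (fun b => r a b)).card = ∑ b ∈ Bf, (A.filter (fun a => r a b)).card := by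
  simp only [Finset.card_filter]
  rw [Finset.sum_comm]

/-- class representative: the line through z₀ parallel to m -/
noncomputable def rep (H : Plane q I) (z₀ : Pt) (m : Ln) : Ln := cp H m z₀

lemma rep_inc (z₀ : Pt) (m : Ln) : I z₀ (rep H z₀ m) := cp_inc H m z₀

lemma rep_par (z₀ : Pt) (m : Ln) : IsPar I (rep H z₀ m) m := cp_par H m z₀

lemma rep_eq_iff {z₀ : Pt} {k : Ln} (hk : I z₀ k) (m : Ln) :
    rep H z₀ m = k ↔ IsPar I m k := by
  constructor
  · intro he
    exact IsPar.symm (he ▸ rep_par H z₀ m)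
  · intro hpar
    exact (cp_unique H hk (IsPar.symm hpar)).symm

lemma rep_idem {z₀ : Pt} {k : Ln} (hk : I z₀ k) : rep H z₀ k = k :=
  (rep_eq_iff H hk k).mpr (IsPar.refl k)

lemma rep_of_par {z₀ : Pt} {m m' : Ln} (hpar : IsPar I m m') :
    rep H z₀ m = rep H z₀ m' := by
  show cp H m z₀ = cp H m' z₀
  exact cp_unique H (cp_inc H m z₀) (par_trans H (cp_par H m z₀) hpar)

lemma sum_fiber_lines (z₀ : Pt) (A : Finset Ln) :
    ∑ k ∈ lf I z₀, (A.filter (fun m => rep H z₀ m = k)).card = A.card := by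
  exact (Finset.card_eq_sum_card_fiberwise
    (fun m _ => mem_lf.mpr (rep_inc H z₀ m))).symm

lemma mem_cls_par {z₀ : Pt} {k m : Ln} (hk : I z₀ k) (hm : rep H z₀ m = k) :
    IsPar I m k := (rep_eq_iff H hk m).mp hm

lemma sum_fiber_points {z₀ : Pt} {k : Ln} (hk : I z₀ k) (Bset : Finset Pt) :
    ∑ m ∈ Finset.univ.filter (fun m => rep H z₀ m = k),
      (Bset.filter (fun x => I x m)).card = Bset.card := by
  have h := Finset.card_eq_sum_card_fiberwise (f := fun x => cp H k x) (s := Bset)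
    (t := Finset.univ.filter (fun m => rep H z₀ m = k))
    (fun x _ => Finset.mem_filter.mpr ⟨Finset.mem_univ _,
      (rep_eq_iff H hk _).mpr (cp_par H k x)⟩)
  rw [h]
  apply Finset.sum_congr rfl
  intro m hm
  have hmk : IsPar I m k := mem_cls_par H hk (Finset.mem_filter.mp hm).2
  congr 1
  apply Finset.filter_congr
  intro x _
  constructor
  · intro hxm
    exact (cp_unique H hxm hmk).symm
  · intro he
    exact he ▸ cp_inc H k x

lemma card_cls {z₀ : Pt} {k : Ln} (hk : I z₀ k) :
    (Finset.univ.filter (fun m => rep H z₀ m = k)).card = q := by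
  have he : (Finset.univ.filter (fun m => rep H z₀ m = k))
      = (Finset.univ.filter (fun m => IsPar I m k)) := by
    ext m
    simp only [Finset.mem_filter, Finset.mem_univ, true_and]
    exact rep_eq_iff H hk m
  rw [he, card_par_class H k]

/-- decomposition of ordered distinct pairs of lines of `Lf` by their meeting point
    (for intersecting pairs) or their class (for parallel pairs) -/
lemma pair_decomp (z₀ : Pt) (Lf : Finset Ln) :
    (∑ x : Pt, ((Lf.filter (fun l => I x l)).offDiag).card)
      + (∑ k ∈ lf I z₀, ((Lf.filter (fun m => rep H z₀ m = k)).offDiag).card)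
      = Lf.offDiag.card := by
  classical
  set φ : Ln × Ln → Pt ⊕ Ln := fun e =>
    if h : IsPar I e.1 e.2 then inr (rep H z₀ e.1) else inl (meet_of_not_par H h).choose
    with hφ
  have hfib := Finset.card_eq_sum_card_fiberwise
    (f := φ) (s := Lf.offDiag) (t := (Finset.univ : Finset (Pt ⊕ Ln)))
    (fun e _ => Finset.mem_univ _)
  rw [hfib, Fintype.sum_sum_type]
  congr 1
  · -- meeting pairs
    apply Finset.sum_congr rfl
    intro x _
    congr 1
    ext e
    constructor
    · intro he
      obtain ⟨h1, h2, h3⟩ := Finset.mem_offDiag.mp he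
      obtain ⟨h1L, h1x⟩ := Finset.mem_filter.mp h1
      obtain ⟨h2L, h2x⟩ := Finset.mem_filter.mp h2
      have hpar : ¬ IsPar I e.1 e.2 := not_par_iff.mpr ⟨h3, x, h1x, h2x⟩
      refine Finset.mem_filter.mpr ⟨Finset.mem_offDiag.mpr ⟨h1L, h2L, h3⟩, ?_⟩
      simp only [hφ]
      rw [dif_neg hpar]
      have := ((meet_of_not_par H hpar).choose_spec.2 x ⟨h1x, h2x⟩).symm
      rw [this]
    · intro he
      obtain ⟨heo, hphi⟩ := Finset.mem_filter.mp he
      obtain ⟨h1, h2, h3⟩ := Finset.mem_offDiag.mp heo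
      simp only [hφ] at hphi
      by_cases hpar : IsPar I e.1 e.2
      · rw [dif_pos hpar] at hphi
        simp at hphi
      · rw [dif_neg hpar] at hphi
        obtain ⟨⟨g1, g2⟩, -⟩ := (meet_of_not_par H hpar).choose_spec
        have hcx : (meet_of_not_par H hpar).choose = x := by
          simpa using hphi
        rw [hcx] at g1 g2
        exact Finset.mem_offDiag.mpr ⟨Finset.mem_filter.mpr ⟨h1, g1⟩,
          Finset.mem_filter.mpr ⟨h2, g2⟩, h3⟩
  · -- parallel pairs
    have hzero : ∀ k ∈ (Finset.univ : Finset Ln), k ∉ lf I z₀ →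
        ((Lf.offDiag).filter (fun e => φ e = inr k)).card = 0 := by
      intro k _ hk
      rw [Finset.card_eq_zero, Finset.filter_eq_empty_iff]
      intro e he
      simp only [hφ]
      split_ifs with hpar
      · intro hcon
        apply hk
        have : rep H z₀ e.1 = k := by simpa using hcon
        exact this ▸ mem_lf.mpr (rep_inc H z₀ e.1)
      · simp
    rw [← Finset.sum_subset (Finset.subset_univ (lf I z₀)) hzero]
    apply Finset.sum_congr rfl
    intro k hk
    have hkz := mem_lf.mp hk
    congr 1
    ext e
    constructor
    · intro he
      obtain ⟨h1, h2, h3⟩ := Finset.mem_offDiag.mp he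
      obtain ⟨h1L, h1k⟩ := Finset.mem_filter.mp h1
      obtain ⟨h2L, h2k⟩ := Finset.mem_filter.mp h2
      have hpar : IsPar I e.1 e.2 :=
        par_trans H (mem_cls_par H hkz h1k) (IsPar.symm (mem_cls_par H hkz h2k))
      refine Finset.mem_filter.mpr ⟨Finset.mem_offDiag.mpr ⟨h1L, h2L, h3⟩, ?_⟩
      simp only [hφ]
      rw [dif_pos hpar, h1k]
    · intro he
      obtain ⟨heo, hphi⟩ := Finset.mem_filter.mp he
      obtain ⟨h1, h2, h3⟩ := Finset.mem_offDiag.mp heo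
      simp only [hφ] at hphi
      by_cases hpar : IsPar I e.1 e.2
      · rw [dif_pos hpar] at hphi
        have he1 : rep H z₀ e.1 = k := by simpa using hphi
        have he2 : rep H z₀ e.2 = k := (rep_of_par H (IsPar.symm hpar)).trans he1
        exact Finset.mem_offDiag.mpr ⟨Finset.mem_filter.mpr ⟨h1, he1⟩,
          Finset.mem_filter.mpr ⟨h2, he2⟩, h3⟩
      · rw [dif_neg hpar] at hphi
        simp at hphi

omit H in
lemma caseA_arith (q p l U HP B2 : ℤ) (hq : 13 ≤ q)
    (hM : l + U + HP = (q + 1) * q + B2) (hU : U ≤ q + 1) (hHP : HP ≤ (q + 1) * p)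
    (hB2 : 0 ≤ B2) (hcon : p + l + 5 ≤ 3 * q) (hcase : p + 3 ≤ q) : False := by
  nlinarith [mul_nonneg (by linarith : (0:ℤ) ≤ q) (by linarith : (0:ℤ) ≤ q - p - 3)]

omit H in
lemma caseB1_arith (q p l : ℤ) (hq : 13 ≤ q)
    (hIneq : l * q + l + 2 ≥ 2 * (q * q) - 2 * p)
    (hcon : p + l + 5 ≤ 3 * q) (hp1 : q ≤ p + 1) : False := by
  have hl3 : l ≤ 3 * q - 5 - p := by linarith
  have hmul := mul_le_mul_of_nonneg_right hl3 (by linarith : (0:ℤ) ≤ q)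
  have hpq : (q - 1) * (q - 1) ≤ p * (q - 1) :=
    mul_le_mul_of_nonneg_right (by linarith) (by linarith)
  nlinarith [hIneq, hmul, hpq]

omit H in
lemma final_arith (q Sd Slam B E n0 n1 r2 : ℤ) (hq : 13 ≤ q)
    (hpair : Sd + Slam + (2 * q - 3) = (2 * q - 3) * (2 * q - 3))
    (hSd : Sd ≤ B * B + 2 * r2 + 3 * E + E * E)
    (hSlam : Slam ≤ (q - 2) * (q - 4))
    (hI1 : (2 * q - 3) * q = B + n1 + 2 * r2 + E)
    (hI2 : q * q = (q - 2) + n0 + n1 + r2)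
    (hn0 : 0 ≤ n0) (hn0' : n0 ≤ 1) (hn1 : n1 ≤ 2 * q - 3)
    (hB : 0 ≤ B) (hE : 0 ≤ E) : False := by
  have hn1eq : n1 = q + 4 + B + E - 2 * n0 := by nlinarith [hI1, hI2]
  have hBE : B + E ≤ q - 5 := by linarith
  have hsq : B * B + E * E ≤ (q - 5) * (q - 5) := by
    nlinarith [mul_nonneg hB hE,
      mul_le_mul hBE hBE (by linarith : (0:ℤ) ≤ B + E) (by linarith : (0:ℤ) ≤ q - 5)]
  nlinarith [hpair, hSd, hSlam, hn1eq, hI2, hBE, hsq]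


lemma lower {Pf : Finset Pt} {Lf : Finset Ln}
    (hres : IsResolvingSet (IncGraph I) (↑(SV Pf Lf) : Set (Pt ⊕ Ln))) :
    3 * q - 4 ≤ Pf.card + Lf.card := by
  classical
  have hq := H.hq
  by_contra hcon
  push_neg at hcon
  set p := Pf.card with hp
  set ℓ := Lf.card with hℓ
  have hcon5 : p + ℓ + 5 ≤ 3 * q := by omega
  -- a base point
  have hPtne : Nonempty Pt := by
    apply Fintype.card_pos_iff.mp
    rw [card_Pt H]
    nlinarith
  obtain ⟨z₀⟩ := hPtne
  have hKcard : (lf I z₀).card = q + 1 := card_lf H z₀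
  have hKne : (lf I z₀).Nonempty := by rw [← Finset.card_pos, hKcard]; omega
  obtain ⟨lstar, -⟩ := hKne
  -- class quantities
  set cls : Ln → Finset Ln := fun k => Finset.univ.filter (fun m => rep H z₀ m = k)
    with hcls
  set lam : Ln → ℕ := fun k => (Lf.filter (fun m => rep H z₀ m = k)).card with hlam
  set freeN : Ln → ℕ := fun k =>
    ((cls k).filter (fun m => m ∉ Lf ∧ ∀ x ∈ Pf, ¬ I x m)).card with hfreeN
  set hitP : Ln → ℕ := fun k => ((cls k).filter (fun m => ∃ x ∈ Pf, I x m)).card with hhitP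
  set hpp : Ln → ℕ := fun k =>
    ((cls k).filter (fun m => m ∈ Lf ∧ ∃ x ∈ Pf, I x m)).card with hhpp
  -- at most one free line per class
  have hfree_le : ∀ k ∈ lf I z₀, freeN k ≤ 1 := by
    intro k hk
    apply Finset.card_le_one.mpr
    intro m hm m' hm'
    obtain ⟨hmc, hmL, hmP⟩ := Finset.mem_filter.mp hm
    obtain ⟨hm'c, hm'L, hm'P⟩ := Finset.mem_filter.mp hm'
    have hkz := mem_lf.mp hk
    have hpar : IsPar I m m' :=
      par_trans H (mem_cls_par H hkz (Finset.mem_filter.mp hmc).2)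
        (IsPar.symm (mem_cls_par H hkz (Finset.mem_filter.mp hm'c).2))
    exact resolving_par H hres hmL hm'L hpar hmP hm'P
  -- class identity : lam + free + hitP = q + hpp
  have hid : ∀ k ∈ lf I z₀, lam k + freeN k + hitP k = q + hpp k := by
    intro k hk
    have hkz := mem_lf.mp hk
    -- split cls k by membership in Lf
    have e1 : ((cls k).filter (fun m => m ∈ Lf)).card
        + ((cls k).filter (fun m => m ∉ Lf)).card = q := by
      rw [Finset.card_filter_add_card_filter_not]
      exact card_cls H hkz
    have e2 : ((cls k).filter (fun m => m ∈ Lf)).card = lam k := by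
      rw [hlam]
      congr 1
      ext m
      simp only [hcls, Finset.mem_filter, Finset.mem_univ, true_and]
      tauto
    -- split the not-in-Lf part by hitting Pf
    have e3 : (((cls k).filter (fun m => m ∉ Lf)).filter (fun m => ∃ x ∈ Pf, I x m)).card
        + (((cls k).filter (fun m => m ∉ Lf)).filter (fun m => ¬ ∃ x ∈ Pf, I x m)).card
        = ((cls k).filter (fun m => m ∉ Lf)).card := by
      rw [Finset.card_filter_add_card_filter_not]
    have e4 : (((cls k).filter (fun m => m ∉ Lf)).filter (fun m => ¬ ∃ x ∈ Pf, I x m)).card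
        = ((cls k).filter (fun m => m ∉ Lf ∧ ∀ x ∈ Pf, ¬ I x m)).card := by
      congr 1
      ext m
      simp only [Finset.mem_filter, not_exists, not_and]
      tauto
    -- split hitP by membership in Lf
    have e5 : ((cls k).filter (fun m => ∃ x ∈ Pf, I x m)).card
        = ((cls k).filter (fun m => m ∈ Lf ∧ ∃ x ∈ Pf, I x m)).card
          + (((cls k).filter (fun m => m ∉ Lf)).filter (fun m => ∃ x ∈ Pf, I x m)).card := by
      rw [← Finset.card_filter_add_card_filter_not
        (s := (cls k).filter (fun m => ∃ x ∈ Pf, I x m)) (p := fun m => m ∈ Lf)]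
      congr 1
      · congr 1
        ext m
        simp only [Finset.mem_filter]
        constructor
        · rintro ⟨⟨hc, he⟩, hL⟩
          exact ⟨hc, hL, he⟩
        · rintro ⟨hc, hL, he⟩
          exact ⟨⟨hc, he⟩, hL⟩
      · congr 1
        ext m
        simp only [Finset.mem_filter]
        constructor
        · rintro ⟨⟨hc, he⟩, hL⟩
          exact ⟨⟨hc, hL⟩, he⟩
        · rintro ⟨⟨hc, hL⟩, he⟩
          exact ⟨⟨hc, he⟩, hL⟩
    simp only [hfreeN, hhitP, hhpp]
    omega
  have hhitP_le : ∀ k ∈ lf I z₀, hitP k ≤ p := by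
    intro k hk
    have hkz := mem_lf.mp hk
    have hsum := sum_fiber_points H hkz Pf
    rw [hp]
    calc hitP k = ∑ m ∈ (cls k).filter (fun m => ∃ x ∈ Pf, I x m), 1 := by
          rw [Finset.sum_const, smul_eq_mul, mul_one]
      _ ≤ ∑ m ∈ (cls k).filter (fun m => ∃ x ∈ Pf, I x m),
            (Pf.filter (fun x => I x m)).card := by
          apply Finset.sum_le_sum
          intro m hm
          obtain ⟨-, x, hx1, hx2⟩ := Finset.mem_filter.mp hm
          exact Finset.card_pos.mpr ⟨x, Finset.mem_filter.mpr ⟨hx1, hx2⟩⟩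
      _ ≤ ∑ m ∈ cls k, (Pf.filter (fun x => I x m)).card :=
          Finset.sum_le_sum_of_subset (Finset.filter_subset _ _)
      _ = Pf.card := hsum
  -- sums over classes
  have hSumLam : ∑ k ∈ lf I z₀, lam k = ℓ := sum_fiber_lines H z₀ Lf
  set U := ∑ k ∈ lf I z₀, freeN k with hUdef
  set HP := ∑ k ∈ lf I z₀, hitP k with hHPdef
  set B2 := ∑ k ∈ lf I z₀, hpp k with hB2def
  have hM : ℓ + U + HP = (q + 1) * q + B2 := by
    have h1 : ∑ k ∈ lf I z₀, (lam k + freeN k + hitP k)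
        = ∑ k ∈ lf I z₀, (q + hpp k) := Finset.sum_congr rfl hid
    rw [Finset.sum_add_distrib, Finset.sum_add_distrib, hSumLam,
      Finset.sum_add_distrib, Finset.sum_const, hKcard, smul_eq_mul] at h1
    omega
  have hUle : U ≤ q + 1 := by
    calc U ≤ ∑ _k ∈ lf I z₀, 1 := Finset.sum_le_sum hfree_le
      _ = q + 1 := by rw [Finset.sum_const, hKcard, smul_eq_mul, mul_one]
  have hHPle : HP ≤ (q + 1) * p := by
    calc HP ≤ ∑ _k ∈ lf I z₀, p := Finset.sum_le_sum hhitP_le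
      _ = (q + 1) * p := by rw [Finset.sum_const, hKcard, smul_eq_mul]
  -- point-side quantities
  set Qc := Finset.univ \ Pf with hQcdef
  set d : Pt → ℕ := fun x => (Lf.filter (fun l => I x l)).card with hd
  set N0 := Qc.filter (fun x => d x = 0) with hN0
  set N1 := Qc.filter (fun x => d x = 1) with hN1
  set R2 := Qc.filter (fun x => 2 ≤ d x) with hR2
  have hmemQc : ∀ x, x ∈ Qc ↔ x ∉ Pf := by
    intro x
    simp [hQcdef]
  have hn0le : N0.card ≤ 1 := by
    apply Finset.card_le_one.mpr
    intro x hx y hy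
    obtain ⟨hxQ, hx0⟩ := Finset.mem_filter.mp hx
    obtain ⟨hyQ, hy0⟩ := Finset.mem_filter.mp hy
    have hex : ∀ z, d z = 0 → ∀ l ∈ Lf, ¬ I z l := by
      intro z hz l hl hI
      have : l ∈ Lf.filter (fun l => I z l) := Finset.mem_filter.mpr ⟨hl, hI⟩
      rw [hd] at hz
      simp only [Finset.card_eq_zero] at hz
      rw [hz] at this
      simp at this
    exact resolving_A H hres ((hmemQc x).mp hxQ) ((hmemQc y).mp hyQ)
      (fun l hl => iff_of_false (hex x hx0 l hl) (hex y hy0 l hl))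
  have hn1le : N1.card ≤ ℓ := by
    apply Finset.card_le_card_of_injOn
      (fun x => if h : (Lf.filter (fun l => I x l)).Nonempty then h.choose else lstar)
    · intro x hx
      obtain ⟨hxQ, hx1⟩ := Finset.mem_filter.mp hx
      have hne : (Lf.filter (fun l => I x l)).Nonempty := by
        rw [← Finset.card_pos]
        simp only [hd] at hx1
        omega
      simp only [dif_pos hne]
      exact (Finset.mem_filter.mp hne.choose_spec).1
    · intro x hx y hy heq
      obtain ⟨hxQ, hx1⟩ := Finset.mem_filter.mp (by exact_mod_cast hx)
      obtain ⟨hyQ, hy1⟩ := Finset.mem_filter.mp (by exact_mod_cast hy)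
      have hnex : (Lf.filter (fun l => I x l)).Nonempty := by
        rw [← Finset.card_pos]; simp only [hd] at hx1; omega
      have hney : (Lf.filter (fun l => I y l)).Nonempty := by
        rw [← Finset.card_pos]; simp only [hd] at hy1; omega
      simp only [dif_pos hnex, dif_pos hney] at heq
      have hx1' : (Lf.filter (fun l => I x l)).card = 1 := hx1
      have hy1' : (Lf.filter (fun l => I y l)).card = 1 := hy1
      obtain ⟨a, ha⟩ := Finset.card_eq_one.mp hx1'
      obtain ⟨b, hb⟩ := Finset.card_eq_one.mp hy1'
      have hxa : hnex.choose = a := by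
        exact Finset.card_le_one.mp (le_of_eq hx1') _ hnex.choose_spec a
          (by rw [ha]; exact Finset.mem_singleton_self a)
      have hyb : hney.choose = b := by
        exact Finset.card_le_one.mp (le_of_eq hy1') _ hney.choose_spec b
          (by rw [hb]; exact Finset.mem_singleton_self b)
      have hab : a = b := by rw [← hxa, ← hyb, heq]
      apply resolving_A H hres ((hmemQc x).mp hxQ) ((hmemQc y).mp hyQ)
      intro l hl
      constructor
      · intro hI
        have : l ∈ Lf.filter (fun l => I x l) := Finset.mem_filter.mpr ⟨hl, hI⟩
        rw [ha] at this
        have : l = a := by simpa using this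
        have hbmem : b ∈ Lf.filter (fun l => I y l) := by rw [hb]; simp
        have := (Finset.mem_filter.mp hbmem).2
        rwa [← hab, ← ‹l = a›] at this
      · intro hI
        have : l ∈ Lf.filter (fun l => I y l) := Finset.mem_filter.mpr ⟨hl, hI⟩
        rw [hb] at this
        have : l = b := by simpa using this
        have hamem : a ∈ Lf.filter (fun l => I x l) := by rw [ha]; simp
        have := (Finset.mem_filter.mp hamem).2
        rwa [hab, ← ‹l = b›] at this
  -- partition of Qc
  have hQcP : Qc.card + p = q * q := by
    rw [hQcdef, hp, Finset.card_sdiff_add_card_eq_card (Finset.subset_univ Pf),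
      Finset.card_univ, card_Pt H, pow_two]
  have eqN1 : (Qc.filter (fun x => ¬ d x = 0)).filter (fun x => d x = 1) = N1 := by
    ext x
    simp only [hN1, Finset.mem_filter]
    constructor
    · rintro ⟨⟨h1, h2⟩, h3⟩
      exact ⟨h1, h3⟩
    · rintro ⟨h1, h3⟩
      exact ⟨⟨h1, by omega⟩, h3⟩
  have eqR2 : (Qc.filter (fun x => ¬ d x = 0)).filter (fun x => ¬ d x = 1) = R2 := by
    ext x
    simp only [hR2, Finset.mem_filter]
    constructor
    · rintro ⟨⟨h1, h2⟩, h3⟩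
      exact ⟨h1, by omega⟩
    · rintro ⟨h1, h3⟩
      exact ⟨⟨h1, by omega⟩, by omega⟩
  have hsplit0 : N0.card + (Qc.filter (fun x => ¬ d x = 0)).card = Qc.card := by
    rw [hN0, Finset.card_filter_add_card_filter_not]
  have hsplit1 : N1.card + R2.card = (Qc.filter (fun x => ¬ d x = 0)).card := by
    rw [← eqN1, ← eqR2, Finset.card_filter_add_card_filter_not]
  have hI2 : q * q = p + N0.card + N1.card + R2.card := by omega
  -- incidence count
  have htot : ∑ x : Pt, d x = ℓ * q := by
    have h := dcount H (Finset.univ : Finset Pt) Lf (fun x l => I x l)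
    rw [hd]
    rw [h]
    have : ∀ l ∈ Lf, (Finset.univ.filter (fun x => I x l)).card = q := by
      intro l _
      exact card_pf H l
    rw [Finset.sum_congr rfl this, Finset.sum_const, smul_eq_mul, hℓ]
  have hsum_split : ∀ f : Pt → ℕ, ∑ x : Pt, f x
      = ∑ x ∈ Pf, f x + (∑ x ∈ N0, f x + (∑ x ∈ N1, f x + ∑ x ∈ R2, f x)) := by
    intro f
    have h1 : ∑ x ∈ Qc, f x + ∑ x ∈ Pf, f x = ∑ x : Pt, f x :=
      Finset.sum_sdiff (Finset.subset_univ Pf)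
    have h2 : ∑ x ∈ N0, f x + ∑ x ∈ Qc.filter (fun x => ¬ d x = 0), f x
        = ∑ x ∈ Qc, f x := by
      rw [hN0]
      exact Finset.sum_filter_add_sum_filter_not Qc _ f
    have h3 : ∑ x ∈ N1, f x + ∑ x ∈ R2, f x
        = ∑ x ∈ Qc.filter (fun x => ¬ d x = 0), f x := by
      rw [← eqN1, ← eqR2]
      exact Finset.sum_filter_add_sum_filter_not _ _ f
    omega
  set B := ∑ x ∈ Pf, d x with hB
  set E := ∑ x ∈ R2, (d x - 2) with hE
  have hI1 : ℓ * q = B + N1.card + 2 * R2.card + E := by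
    have h0 : ∑ x ∈ N0, d x = 0 := by
      apply Finset.sum_eq_zero
      intro x hx
      exact (Finset.mem_filter.mp hx).2
    have h1 : ∑ x ∈ N1, d x = N1.card := by
      rw [Finset.sum_congr rfl (fun x hx => (Finset.mem_filter.mp hx).2),
        Finset.sum_const, smul_eq_mul, mul_one]
    have h2 : ∑ x ∈ R2, d x = E + 2 * R2.card := by
      have : ∀ x ∈ R2, d x = (d x - 2) + 2 := by
        intro x hx
        have := (Finset.mem_filter.mp hx).2
        omega
      rw [Finset.sum_congr rfl this, Finset.sum_add_distrib, Finset.sum_const,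
        smul_eq_mul, hE]
      ring
    have := hsum_split d
    omega
  -- pair counting
  set Sd := ∑ x : Pt, ((Lf.filter (fun l => I x l)).offDiag).card with hSd
  set Slam := ∑ k ∈ lf I z₀, ((Lf.filter (fun m => rep H z₀ m = k)).offDiag).card
    with hSlam
  have hpair : Sd + Slam + ℓ = ℓ * ℓ := by
    have h1 := pair_decomp H z₀ Lf
    have h2 := Finset.offDiag_card Lf
    have h3 : ℓ ≤ ℓ * ℓ := by
      rcases Nat.eq_zero_or_pos ℓ with h | h
      · omega
      · calc ℓ = ℓ * 1 := by ring
          _ ≤ ℓ * ℓ := Nat.mul_le_mul_left ℓ h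
    rw [hSd, hSlam, ← hℓ] at *
    omega
  -- upper bound for Sd
  have hSd_le : Sd ≤ B * B + 2 * R2.card + 3 * E + E * E := by
    have hform : ∀ x : Pt, ((Lf.filter (fun l => I x l)).offDiag).card
        = d x * d x - d x := fun x => Finset.offDiag_card _
    have hPfB : ∑ x ∈ Pf, (d x * d x - d x) ≤ B * B := by
      calc ∑ x ∈ Pf, (d x * d x - d x) ≤ ∑ x ∈ Pf, d x * B := by
            apply Finset.sum_le_sum
            intro x hx
            have hdB : d x ≤ B := Finset.single_le_sum (fun y _ => Nat.zero_le (d y)) hx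
            calc d x * d x - d x ≤ d x * d x := Nat.sub_le _ _
              _ ≤ d x * B := Nat.mul_le_mul_left _ hdB
        _ = B * B := by rw [← Finset.sum_mul, ← hB]
    have hN0z : ∑ x ∈ N0, (d x * d x - d x) = 0 := by
      apply Finset.sum_eq_zero
      intro x hx
      have := (Finset.mem_filter.mp hx).2
      rw [this]
      omega
    have hN1z : ∑ x ∈ N1, (d x * d x - d x) = 0 := by
      apply Finset.sum_eq_zero
      intro x hx
      have := (Finset.mem_filter.mp hx).2
      rw [this]
      omega
    have hR2b : ∑ x ∈ R2, (d x * d x - d x) ≤ E * E + 3 * E + 2 * R2.card := by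
      have hpt : ∀ x ∈ R2, d x * d x - d x = (d x - 2) * (d x - 2) + 3 * (d x - 2) + 2 := by
        intro x hx
        have h2 := (Finset.mem_filter.mp hx).2
        obtain ⟨e, he⟩ : ∃ e, d x = e + 2 := ⟨d x - 2, by omega⟩
        rw [he]
        have h3 : (e + 2) * (e + 2) = e * e + 4 * e + 4 := by ring
        have h4 : (e + 2 - 2) = e := by omega
        rw [h4, h3]
        omega
      rw [Finset.sum_congr rfl hpt]
      rw [Finset.sum_add_distrib, Finset.sum_add_distrib, Finset.sum_const, smul_eq_mul]
      have hsq : ∑ x ∈ R2, (d x - 2) * (d x - 2) ≤ E * E := by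
        calc ∑ x ∈ R2, (d x - 2) * (d x - 2) ≤ ∑ x ∈ R2, (d x - 2) * E := by
              apply Finset.sum_le_sum
              intro x hx
              exact Nat.mul_le_mul_left _
                (Finset.single_le_sum (fun y _ => Nat.zero_le (d y - 2)) hx)
          _ = E * E := by rw [← Finset.sum_mul, ← hE]
      have hlin : ∑ x ∈ R2, 3 * (d x - 2) = 3 * E := by
        rw [← Finset.mul_sum, hE]
      omega
    have := hsum_split (fun x => d x * d x - d x)
    simp only [hSd] at *
    rw [Finset.sum_congr rfl (fun x _ => hform x)]
    omega
  -- now the case analysis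
  rcases le_or_gt (p + 3) q with hcase | hcase
  · -- p ≤ q - 3 : many lines needed in every class
    have hz2 : (p : ℤ) + ℓ + 5 ≤ 3 * q := by exact_mod_cast hcon5
    have hz3 : (p : ℤ) + 3 ≤ q := by exact_mod_cast hcase
    have hz4 : (13 : ℤ) ≤ q := by exact_mod_cast hq
    have c1 : (ℓ : ℤ) + U + HP = ((q : ℤ) + 1) * q + B2 := by exact_mod_cast hM
    have c2 : (U : ℤ) ≤ q + 1 := by exact_mod_cast hUle
    have c3 : (HP : ℤ) ≤ ((q : ℤ) + 1) * p := by exact_mod_cast hHPle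
    exact caseA_arith q p ℓ U HP B2 hz4 c1 c2 c3 (Int.ofNat_nonneg _) hz2 hz3
  · -- p ≥ q - 2
    have hzIneq : (ℓ : ℤ) * q + ℓ + 2 ≥ 2 * ((q : ℤ) * q) - 2 * p := by
      have c1 : (ℓ : ℤ) * q = B + N1.card + 2 * R2.card + E := by exact_mod_cast hI1
      have c2 : ((q : ℤ)) * q = p + N0.card + N1.card + R2.card := by exact_mod_cast hI2
      have c3 : (N0.card : ℤ) ≤ 1 := by exact_mod_cast hn0le
      have c4 : (N1.card : ℤ) ≤ ℓ := by exact_mod_cast hn1le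
      have c5 : (0 : ℤ) ≤ B := Int.ofNat_nonneg _
      have c6 : (0 : ℤ) ≤ E := Int.ofNat_nonneg _
      linarith
    have hz2 : (p : ℤ) + ℓ + 5 ≤ 3 * q := by exact_mod_cast hcon5
    have hz4 : (13 : ℤ) ≤ q := by exact_mod_cast hq
    have hle2 : q ≤ p + 2 := by omega
    rcases eq_or_lt_of_le hle2 with hc | hc
    · -- the extremal case q = p + 2
      have hp2 : p + 2 = q := hc.symm
      have hl_up : ℓ ≤ 2 * q - 3 := by omega
      have hl_low : 2 * q - 3 ≤ ℓ := by
        by_contra hll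
        push_neg at hll
        have hz6 : (ℓ : ℤ) ≤ 2 * (q : ℤ) - 4 := by omega
        have hzp : (p : ℤ) + 2 = q := by exact_mod_cast hp2
        have hq1 : (0 : ℤ) ≤ (q : ℤ) + 1 := by linarith
        nlinarith [hzIneq, mul_le_mul_of_nonneg_right hz6 (by linarith : (0:ℤ) ≤ (q:ℤ))]
      have hlq : ℓ = 2 * q - 3 := le_antisymm hl_up hl_low
      -- refined class bounds
      have hlam_le : ∀ k ∈ lf I z₀, lam k ≤ 2 + ((p - hitP k) + hpp k) := by
        intro k hk
        have h1 := hid k hk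
        have h2 := hfree_le k hk
        have h3 := hhitP_le k hk
        omega
      have hlam_ge : ∀ k ∈ lf I z₀, 1 ≤ lam k := by
        intro k hk
        have h1 := hid k hk
        have h2 := hfree_le k hk
        have h3 := hhitP_le k hk
        omega
      set SK := ∑ k ∈ lf I z₀, ((p - hitP k) + hpp k) with hSKdef
      have hSK_e : SK + HP = (q + 1) * p + B2 := by
        have h1 : ∀ k ∈ lf I z₀, ((p - hitP k) + hitP k) = p := by
          intro k hk
          have := hhitP_le k hk
          omega
        have h3 : ∑ k ∈ lf I z₀, (p - hitP k) + ∑ k ∈ lf I z₀, hitP k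
            = (q + 1) * p := by
          rw [← Finset.sum_add_distrib, Finset.sum_congr rfl h1, Finset.sum_const,
            hKcard, smul_eq_mul]
        rw [hSKdef, hHPdef, hB2def, Finset.sum_add_distrib]
        rw [← h3]
        ring
      have hSK_le : SK ≤ q - 4 := by
        have c1 : (ℓ : ℤ) + U + HP = ((q : ℤ) + 1) * q + B2 := by exact_mod_cast hM
        have c2 : (SK : ℤ) + HP = ((q : ℤ) + 1) * p + B2 := by exact_mod_cast hSK_e
        have c3 : (U : ℤ) ≤ (q : ℤ) + 1 := by exact_mod_cast hUle
        have hzp : (p : ℤ) = (q : ℤ) - 2 := by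
          have : (p : ℤ) + 2 = q := by exact_mod_cast hp2
          linarith
        have hzl : (ℓ : ℤ) = 2 * (q : ℤ) - 3 := by omega
        have hqp : ((q : ℤ) + 1) * q = ((q : ℤ) + 1) * p + 2 * ((q : ℤ) + 1) := by
          rw [hzp]; ring
        have : (SK : ℤ) ≤ (q : ℤ) - 4 := by linarith
        omega
      have hsum_lam1 : ∑ k ∈ lf I z₀, (lam k - 1) + (q + 1) = ℓ := by
        have h1 : ∀ k ∈ lf I z₀, (lam k - 1) + 1 = lam k := by
          intro k hk
          have := hlam_ge k hk
          omega
        have h2 : ∑ k ∈ lf I z₀, ((lam k - 1) + 1) = ∑ k ∈ lf I z₀, lam k :=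
          Finset.sum_congr rfl h1
        rw [Finset.sum_add_distrib, Finset.sum_const, hKcard, smul_eq_mul, mul_one,
          hSumLam] at h2
        exact h2
      have hSlam_le : Slam ≤ (2 + SK) * (q - 4) := by
        have hper : ∀ k ∈ lf I z₀, ((Lf.filter (fun m => rep H z₀ m = k)).offDiag).card
            ≤ (2 + SK) * (lam k - 1) := by
          intro k hk
          rw [Finset.offDiag_card]
          have hge := hlam_ge k hk
          have hle' : lam k ≤ 2 + SK := by
            have h1 := hlam_le k hk
            have h2 : ((p - hitP k) + hpp k) ≤ SK :=
              Finset.single_le_sum (f := fun k => ((p - hitP k) + hpp k))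
                (fun _ _ => Nat.zero_le _) hk
            omega
          have hcard : (Lf.filter (fun m => rep H z₀ m = k)).card = lam k := by
            simp only [hlam]
          rw [hcard]
          obtain ⟨a, ha⟩ : ∃ a, lam k = a + 1 := ⟨lam k - 1, by omega⟩
          rw [ha]
          have he1 : (a + 1) * (a + 1) - (a + 1) = (a + 1) * a := by
            have : (a + 1) * (a + 1) = (a + 1) * a + (a + 1) := by ring
            omega
          have he2 : a + 1 - 1 = a := by omega
          rw [he1, he2]
          exact Nat.mul_le_mul_right a (by omega)
        calc Slam ≤ ∑ k ∈ lf I z₀, (2 + SK) * (lam k - 1) := Finset.sum_le_sum hper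
          _ = (2 + SK) * ∑ k ∈ lf I z₀, (lam k - 1) := by rw [Finset.mul_sum]
          _ = (2 + SK) * (q - 4) := by
              congr 1
              omega
      -- final contradiction, in ℤ
      have hzp : (p : ℤ) = (q : ℤ) - 2 := by
        have : (p : ℤ) + 2 = q := by exact_mod_cast hp2
        linarith
      have hzl : (ℓ : ℤ) = 2 * (q : ℤ) - 3 := by omega
      have hzSK : (SK : ℤ) ≤ (q : ℤ) - 4 := by omega
      have hSlamN : Slam ≤ (q - 2) * (q - 4) := by
        refine le_trans hSlam_le (Nat.mul_le_mul_right _ ?_)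
        omega
      have hzSlam : (Slam : ℤ) ≤ ((q : ℤ) - 2) * ((q : ℤ) - 4) := by
        have h0 : (Slam : ℤ) ≤ (((q - 2) * (q - 4) : ℕ) : ℤ) := by exact_mod_cast hSlamN
        have h2q : 2 ≤ q := by omega
        have h4q : 4 ≤ q := by omega
        rw [Nat.cast_mul, Nat.cast_sub h2q, Nat.cast_sub h4q] at h0
        exact_mod_cast h0
      have hzpair : (Sd : ℤ) + Slam + ℓ = (ℓ : ℤ) * ℓ := by exact_mod_cast hpair
      have hzSd : (Sd : ℤ) ≤ (B : ℤ) * B + 2 * R2.card + 3 * E + (E : ℤ) * E := by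
        exact_mod_cast hSd_le
      have hzI1 : (ℓ : ℤ) * q = B + N1.card + 2 * R2.card + E := by exact_mod_cast hI1
      have hzI2 : (q : ℤ) * q = p + N0.card + N1.card + R2.card := by exact_mod_cast hI2
      have hzn0 : (N0.card : ℤ) ≤ 1 := by exact_mod_cast hn0le
      have hzn1 : (N1.card : ℤ) ≤ ℓ := by exact_mod_cast hn1le
      rw [hzl] at hzpair hzI1 hzn1
      rw [hzp] at hzI2
      exact final_arith (q : ℤ) Sd Slam B E N0.card N1.card R2.card hz4
        hzpair hzSd hzSlam hzI1 hzI2 (Int.ofNat_nonneg _) hzn0 hzn1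
        (Int.ofNat_nonneg _) (Int.ofNat_nonneg _)
    · -- p ≥ q - 1
      have hz5 : (q : ℤ) ≤ (p : ℤ) + 1 := by
        exact_mod_cast (by omega : q ≤ p + 1)
      exact caseB1_arith q p ℓ hz4 hzIneq hz2 hz5

end APAux

open APAux Sum in
/-- The metric dimension of (the incidence graph of) any affine plane of
order `q ≥ 13` is `3q - 4`: `3q - 4` is the least size of a resolving set. -/
theorem affine_metric_dimension {Pt Ln : Type*} [Fintype Pt] [Fintype Ln]
    (q : ℕ) (hq : 13 ≤ q) (I : Pt → Ln → Prop) (hAP : IsAffinePlane q I) :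
    IsLeast {n : ℕ | ∃ S : Set (Pt ⊕ Ln),
      IsResolvingSet (IncGraph I) S ∧ S.ncard = n} (3 * q - 4) := by
  classical
  obtain ⟨hPt, hLn, hl, hp, hj⟩ := hAP
  have H : Plane q I := ⟨hq, hPt, hl, hp, hj⟩
  constructor
  · obtain ⟨S, h1, h2⟩ := exists_upper H
    exact ⟨S, h1, h2⟩
  · rintro n ⟨S, hres, rfl⟩
    set Pf : Finset Pt := Finset.univ.filter (fun p => inl p ∈ S) with hPf
    set Lf : Finset Ln := Finset.univ.filter (fun l => inr l ∈ S) with hLf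
    have hSV : S = (↑(SV Pf Lf) : Set (Pt ⊕ Ln)) := by
      ext x
      rcases x with p | l
      · simp [mem_SV_inl, hPf]
      · simp [mem_SV_inr, hLf]
    rw [hSV] at hres ⊢
    rw [Set.ncard_coe_finset, card_SV]
    exact lower H hres
end

section
/- Let S = P_S ∪ L_S be a resolving set for a biaffine plane of order q, let u be the number of uncovered directions (parallel classes containing no line of L_S) and c the number of unblocked non-adjacency classes (containing no point of P_S). Then |P_S| ≥ (u/(u+1))·2(q−1) and |L_S| ≥ (c/(c+1))·2(q−1). -/
open Set

/-- A biaffine plane of order `q` (an affine plane with one parallel class of lines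
removed), together with its partition into `q` parallel classes of lines (given by
`dir`, the direction) and `q` non-adjacency classes of points (given by `cls`):
`q²` points and `q²` lines, each point on `q` lines, each line with `q` points,
two points on at most one common line; two lines are in the same parallel class iff
they are equal or disjoint; two points are in the same non-adjacency class iff they
are equal or non-collinear; and for every non-incident point-line pair `(p, l)` there
is exactly one line through `p` missing `l` and exactly one point of `l` not
collinear with `p`. -/
def IsBiaffinePlane {Pt Ln : Type*} (q : ℕ) (I : Pt → Ln → Prop)
    (dir : Ln → Fin q) (cls : Pt → Fin q) : Prop :=
  Nat.card Pt = q ^ 2 ∧ Nat.card Ln = q ^ 2 ∧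
  (∀ l, {p | I p l}.ncard = q) ∧
  (∀ p, {l | I p l}.ncard = q) ∧
  (∀ p₁ p₂ : Pt, p₁ ≠ p₂ → {l | I p₁ l ∧ I p₂ l}.ncard ≤ 1) ∧
  (∀ l₁ l₂ : Ln, dir l₁ = dir l₂ ↔ (l₁ = l₂ ∨ ∀ p, ¬ (I p l₁ ∧ I p l₂))) ∧
  (∀ p₁ p₂ : Pt, cls p₁ = cls p₂ ↔ (p₁ = p₂ ∨ ∀ l, ¬ (I p₁ l ∧ I p₂ l))) ∧
  (∀ p l, ¬ I p l →
    (∃! l', I p l' ∧ ∀ p', ¬ (I p' l ∧ I p' l')) ∧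
    (∃! p', I p' l ∧ ∀ l', ¬ (I p l' ∧ I p' l')))

/-! ### Distances in the incidence graph -/

section Dist
variable {Pt Ln : Type*} {I : Pt → Ln → Prop}

@[simp] lemma incG_adj_pl {p : Pt} {l : Ln} :
    (IncGraph I).Adj (Sum.inl p) (Sum.inr l) ↔ I p l := by
  constructor
  · rintro (⟨p', l', hp, hl, h⟩ | ⟨p', l', hp, hl, h⟩) <;> simp_all
  · intro h; exact Or.inl ⟨p, l, rfl, rfl, h⟩

@[simp] lemma incG_adj_lp {p : Pt} {l : Ln} :
    (IncGraph I).Adj (Sum.inr l) (Sum.inl p) ↔ I p l := by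
  rw [SimpleGraph.adj_comm]; exact incG_adj_pl

@[simp] lemma incG_adj_ll {l1 l2 : Ln} :
    ¬ (IncGraph I).Adj (Sum.inr l1) (Sum.inr l2) := by
  rintro (⟨p', l', hp, hl, h⟩ | ⟨p', l', hp, hl, h⟩) <;> simp_all

@[simp] lemma incG_adj_pp {p1 p2 : Pt} :
    ¬ (IncGraph I).Adj (Sum.inl p1) (Sum.inl p2) := by
  rintro (⟨p', l', hp, hl, h⟩ | ⟨p', l', hp, hl, h⟩) <;> simp_all

lemma incG_adj_parity {x y : Pt ⊕ Ln} (h : (IncGraph I).Adj x y) :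
    x.isLeft = !y.isLeft := by
  rcases h with ⟨p, l, hx, hy, _⟩ | ⟨p, l, hx, hy, _⟩ <;> subst hx <;> subst hy <;> rfl

lemma incG_walk_parity {x y : Pt ⊕ Ln} (w : (IncGraph I).Walk x y) :
    Even w.length ↔ (x.isLeft = y.isLeft) := by
  induction w with
  | nil => simp
  | cons h w ih =>
    rename_i a b c
    have hab := incG_adj_parity h
    rw [SimpleGraph.Walk.length_cons, Nat.even_add_one, ih, hab]
    cases b.isLeft <;> cases c.isLeft <;> simp

lemma dist_pl_inc {p : Pt} {l : Ln} (h : I p l) :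
    (IncGraph I).dist (Sum.inl p) (Sum.inr l) = 1 :=
  SimpleGraph.dist_eq_one_iff_adj.2 (incG_adj_pl.2 h)

lemma dist_lp_inc {p : Pt} {l : Ln} (h : I p l) :
    (IncGraph I).dist (Sum.inr l) (Sum.inl p) = 1 :=
  SimpleGraph.dist_eq_one_iff_adj.2 (incG_adj_lp.2 h)

lemma dist_ll {l1 l2 : Ln} (hne : l1 ≠ l2) (p : Pt) (h1 : I p l1) (h2 : I p l2) :
    (IncGraph I).dist (Sum.inr l1) (Sum.inr l2) = 2 := by
  have w : (IncGraph I).Walk (Sum.inr l1) (Sum.inr l2) :=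
    .cons (incG_adj_lp.2 h1) (.cons (incG_adj_pl.2 h2) .nil)
  have hle : (IncGraph I).dist (Sum.inr l1) (Sum.inr l2) ≤ 2 := by
    simpa using SimpleGraph.dist_le
      (.cons (incG_adj_lp.2 h1) (.cons (incG_adj_pl.2 h2) .nil))
  have h0 : (IncGraph I).dist (Sum.inr l1) (Sum.inr l2) ≠ 0 :=
    SimpleGraph.dist_ne_zero_iff_ne_and_reachable.2 ⟨by simp [hne], ⟨w⟩⟩
  have h1' : (IncGraph I).dist (Sum.inr l1) (Sum.inr l2) ≠ 1 := fun h => by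
    exact incG_adj_ll (SimpleGraph.dist_eq_one_iff_adj.1 h)
  omega

lemma dist_pp {p1 p2 : Pt} (hne : p1 ≠ p2) (l : Ln) (h1 : I p1 l) (h2 : I p2 l) :
    (IncGraph I).dist (Sum.inl p1) (Sum.inl p2) = 2 := by
  have w : (IncGraph I).Walk (Sum.inl p1) (Sum.inl p2) :=
    .cons (incG_adj_pl.2 h1) (.cons (incG_adj_lp.2 h2) .nil)
  have hle : (IncGraph I).dist (Sum.inl p1) (Sum.inl p2) ≤ 2 := by
    simpa using SimpleGraph.dist_le
      (.cons (incG_adj_pl.2 h1) (.cons (incG_adj_lp.2 h2) .nil))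
  have h0 : (IncGraph I).dist (Sum.inl p1) (Sum.inl p2) ≠ 0 :=
    SimpleGraph.dist_ne_zero_iff_ne_and_reachable.2 ⟨by simp [hne], ⟨w⟩⟩
  have h1' : (IncGraph I).dist (Sum.inl p1) (Sum.inl p2) ≠ 1 := fun h => by
    exact incG_adj_pp (SimpleGraph.dist_eq_one_iff_adj.1 h)
  omega

lemma dist_pl_non {p : Pt} {l : Ln} (h : ¬ I p l) {p' : Pt} {l' : Ln}
    (h1 : I p' l) (h2 : I p' l') (h3 : I p l') :
    (IncGraph I).dist (Sum.inl p) (Sum.inr l) = 3 := by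
  have w : (IncGraph I).Walk (Sum.inl p) (Sum.inr l) :=
    .cons (incG_adj_pl.2 h3) (.cons (incG_adj_lp.2 h2) (.cons (incG_adj_pl.2 h1) .nil))
  have hle : (IncGraph I).dist (Sum.inl p) (Sum.inr l) ≤ 3 := by
    simpa using SimpleGraph.dist_le
      (.cons (incG_adj_pl.2 h3) (.cons (incG_adj_lp.2 h2) (.cons (incG_adj_pl.2 h1) .nil)))
  obtain ⟨w', hw'⟩ := (SimpleGraph.Reachable.exists_walk_length_eq_dist ⟨w⟩)
  have hodd : ¬ Even ((IncGraph I).dist (Sum.inl p) (Sum.inr l)) := by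
    rw [← hw', incG_walk_parity w']
    simp
  have h1' : (IncGraph I).dist (Sum.inl p) (Sum.inr l) ≠ 1 := fun hd => by
    exact h (incG_adj_pl.1 (SimpleGraph.dist_eq_one_iff_adj.1 hd))
  rw [Nat.even_iff] at hodd
  omega

lemma dist_lp_non {p : Pt} {l : Ln} (h : ¬ I p l) {p' : Pt} {l' : Ln}
    (h1 : I p' l) (h2 : I p' l') (h3 : I p l') :
    (IncGraph I).dist (Sum.inr l) (Sum.inl p) = 3 := by
  rw [SimpleGraph.dist_comm]; exact dist_pl_non h h1 h2 h3

end Dist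

/-! ### Counting lemmas -/

section Count
open Finset
open scoped Classical
variable {A B : Type*} [Fintype A] [Fintype B] {q : ℕ} {I : A → B → Prop} {dir : B → Fin q}

lemma ncard_eq_filter (p : A → Prop) [DecidablePred p] :
    {x | p x}.ncard = (Finset.univ.filter p).card := by
  rw [Set.ncard_eq_toFinset_card', Set.toFinset_setOf]

/-- each parallel class has exactly `q` lines -/
lemma fiber_card (hq : 1 ≤ q) (hA : Nat.card A = q ^ 2) (hB : Nat.card B = q ^ 2)
    (hline : ∀ l, {p | I p l}.ncard = q)
    (hdir : ∀ l₁ l₂ : B, dir l₁ = dir l₂ ↔ (l₁ = l₂ ∨ ∀ p, ¬ (I p l₁ ∧ I p l₂))) :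
    ∀ d, {l | dir l = d}.ncard = q := by
  have hfilter : ∀ d, {l | dir l = d}.ncard = (Finset.univ.filter (fun l => dir l = d)).card := by
    intro d; exact ncard_eq_filter _
  have hub : ∀ d, (Finset.univ.filter (fun l => dir l = d)).card ≤ q := by
    intro d
    set F := Finset.univ.filter (fun l => dir l = d) with hF
    have hdisj : ∀ l₁ ∈ F, ∀ l₂ ∈ F, l₁ ≠ l₂ →
        Disjoint (Finset.univ.filter (fun p => I p l₁)) (Finset.univ.filter (fun p => I p l₂)) := by
      intro l₁ h₁ l₂ h₂ hne
      simp only [hF, Finset.mem_filter] at h₁ h₂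
      have := (hdir l₁ l₂).1 (h₁.2.trans h₂.2.symm)
      rcases this with rfl | hd
      · exact absurd rfl hne
      · rw [Finset.disjoint_left]
        intro p hp hp'
        simp only [Finset.mem_filter] at hp hp'
        exact hd p ⟨hp.2, hp'.2⟩
    have hcard : ∀ l, (Finset.univ.filter (fun p => I p l)).card = q := by
      intro l
      have := hline l
      rwa [ncard_eq_filter] at this
    have := Finset.card_biUnion hdisj
    have hle : (F.biUnion (fun l => Finset.univ.filter (fun p => I p l))).card ≤ Fintype.card A :=
      Finset.card_le_card (Finset.subset_univ _) |>.trans (le_of_eq (Finset.card_univ))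
    rw [this] at hle
    simp only [hcard, Finset.sum_const, smul_eq_mul] at hle
    have hA' : Fintype.card A = q ^ 2 := by rw [← Nat.card_eq_fintype_card]; exact hA
    rw [hA'] at hle
    nlinarith
  have hsum : ∑ d : Fin q, (Finset.univ.filter (fun l => dir l = d)).card = q ^ 2 := by
    rw [← Finset.card_eq_sum_card_fiberwise (fun l _ => Finset.mem_univ (dir l))]
    rw [Finset.card_univ, ← Nat.card_eq_fintype_card, hB]
  intro d
  rw [hfilter]
  by_contra hne
  have hlt : (Finset.univ.filter (fun l => dir l = d)).card < q := lt_of_le_of_ne (hub d) hne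
  have : ∑ d : Fin q, (Finset.univ.filter (fun l => dir l = d)).card < ∑ _d : Fin q, q := by
    apply Finset.sum_lt_sum (fun i _ => hub i) ⟨d, Finset.mem_univ d, hlt⟩
  simp only [Finset.sum_const, Finset.card_univ, Fintype.card_fin, smul_eq_mul] at this
  rw [hsum] at this
  nlinarith

/-- through every point there is exactly one line of every direction -/
lemma thru_unique
    (hpt : ∀ p : A, {l | I p l}.ncard = q)
    (hdir : ∀ l₁ l₂ : B, dir l₁ = dir l₂ ↔ (l₁ = l₂ ∨ ∀ p, ¬ (I p l₁ ∧ I p l₂))) :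
    ∀ (p : A) (d : Fin q), ∃! l, I p l ∧ dir l = d := by
  intro p d
  have hinj : ∀ l₁ l₂ : B, I p l₁ → I p l₂ → dir l₁ = dir l₂ → l₁ = l₂ := by
    intro l₁ l₂ h₁ h₂ hd
    rcases (hdir l₁ l₂).1 hd with rfl | hdisj
    · rfl
    · exact absurd ⟨h₁, h₂⟩ (hdisj p)
  have hcard : (Finset.univ.filter (fun l => I p l)).card = q := by
    have := hpt p; rwa [ncard_eq_filter] at this
  have himg : (Finset.univ.filter (fun l => I p l)).image dir = Finset.univ := by
    apply Finset.eq_univ_of_card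
    rw [Finset.card_image_of_injOn, hcard, Fintype.card_fin]
    intro l₁ h₁ l₂ h₂ hd
    simp only [Finset.mem_coe, Finset.mem_filter] at h₁ h₂
    exact hinj l₁ l₂ h₁.2 h₂.2 hd
  have : d ∈ (Finset.univ.filter (fun l => I p l)).image dir := by
    rw [himg]; exact Finset.mem_univ d
  obtain ⟨l, hl, hld⟩ := Finset.mem_image.1 this
  simp only [Finset.mem_filter] at hl
  refine ⟨l, ⟨hl.2, hld⟩, ?_⟩
  rintro l' ⟨hl', hld'⟩
  exact hinj l' l hl' hl.2 (hld'.trans hld.symm)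

/-- the core double-counting argument -/
lemma counting_core (hq : 2 ≤ q)
    (PS : Set A) (U : Set (Fin q))
    (hfiber : ∀ d, {l | dir l = d}.ncard = q)
    (hthru : ∀ (p : A) (d : Fin q), ∃! l, I p l ∧ dir l = d)
    (claim1 : ∀ d ∈ U, ∀ l1 l2 : B, dir l1 = d → dir l2 = d →
        (∀ p ∈ PS, ¬ I p l1) → (∀ p ∈ PS, ¬ I p l2) → l1 = l2)
    (claim2 : ∀ l1 l2 : B, dir l1 ∈ U → dir l2 ∈ U → ∀ p ∈ PS, I p l1 → I p l2 →
        (∀ p' ∈ PS, I p' l1 → p' = p) → (∀ p' ∈ PS, I p' l2 → p' = p) → l1 = l2) :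
    (PS.ncard : ℝ) ≥ ((U.ncard : ℝ) / (U.ncard + 1)) * (2 * ((q : ℝ) - 1)) := by
  set PSf := PS.toFinset with hPSf
  set Uf := U.toFinset with hUf
  set s := PSf.card with hs
  set u := Uf.card with huset
  set n : B → ℕ := fun l => (PSf.filter (fun p => I p l)).card with hn
  set Lu := Finset.univ.filter (fun l : B => dir l ∈ U) with hLu
  have hinc : ∑ l ∈ Lu, n l = s * u := by
    have h1 : ∑ l ∈ Lu, n l = ∑ p ∈ PSf, (Lu.filter (fun l => I p l)).card := by
      simp only [hn, Finset.card_filter]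
      rw [Finset.sum_comm]
    rw [h1]
    have h2 : ∀ p ∈ PSf, (Lu.filter (fun l => I p l)).card = u := by
      intro p _
      apply Finset.card_bij (fun l _ => dir l)
      · intro l hl
        simp only [hLu, Finset.mem_filter] at hl
        simpa [hUf] using hl.1.2
      · intro l₁ h₁ l₂ h₂ hd
        simp only [hLu, Finset.mem_filter] at h₁ h₂
        obtain ⟨l₀, _, huniq⟩ := hthru p (dir l₁)
        exact (huniq l₁ ⟨h₁.2, rfl⟩).trans (huniq l₂ ⟨h₂.2, hd.symm⟩).symm
      · intro d hd
        obtain ⟨l, ⟨hIl, hdl⟩, _⟩ := hthru p d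
        refine ⟨l, ?_, hdl⟩
        simp only [hLu, Finset.mem_filter]
        exact ⟨⟨Finset.mem_univ l, hdl ▸ (by simpa [hUf] using hd)⟩, hIl⟩
    rw [Finset.sum_congr rfl h2, Finset.sum_const, smul_eq_mul]
  set T := Lu.filter (fun l => n l = 1) with hT
  set M := Lu.filter (fun l => 2 ≤ n l) with hM
  have hts : T.card ≤ s := by
    rcases T.eq_empty_or_nonempty with hemp | ⟨l₀, hl₀⟩
    · simp [hemp]
    · have hl₀' : (PSf.filter (fun p => I p l₀)).Nonempty := by
        apply Finset.card_pos.1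
        have : n l₀ = 1 := (Finset.mem_filter.1 hl₀).2
        simp only [hn] at this
        omega
      haveI : Nonempty A := ⟨hl₀'.choose⟩
      set f : B → A := fun l =>
        if h : (PSf.filter (fun p => I p l)).Nonempty then h.choose else Classical.arbitrary A
        with hf
      have hfmem : ∀ l ∈ T, f l ∈ PSf.filter (fun p => I p l) := by
        intro l hl
        have h1 : n l = 1 := (Finset.mem_filter.1 hl).2
        simp only [hn] at h1
        have hne : (PSf.filter (fun p => I p l)).Nonempty := Finset.card_pos.1 (by omega)
        simp only [hf, dif_pos hne]
        exact hne.choose_spec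
      have hfeq : ∀ l ∈ T, PSf.filter (fun p => I p l) = {f l} := by
        intro l hl
        have h1 : n l = 1 := (Finset.mem_filter.1 hl).2
        simp only [hn] at h1
        obtain ⟨a, ha⟩ := Finset.card_eq_one.1 h1
        rw [ha]
        have := hfmem l hl
        rw [ha, Finset.mem_singleton] at this
        rw [this]
      apply Finset.card_le_card_of_injOn f
      · intro l hl
        exact (Finset.mem_filter.1 (hfmem l hl)).1
      · intro l₁ h₁ l₂ h₂ hfe
        have m₁ := hfmem l₁ h₁
        have m₂ := hfmem l₂ h₂
        simp only [Finset.mem_filter] at m₁ m₂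
        have hU₁ : dir l₁ ∈ U := by
          have := (Finset.mem_filter.1 (Finset.mem_filter.1 h₁).1).2; exact this
        have hU₂ : dir l₂ ∈ U := by
          have := (Finset.mem_filter.1 (Finset.mem_filter.1 h₂).1).2; exact this
        have hPSmem : f l₁ ∈ PS := by simpa [hPSf] using m₁.1
        refine claim2 l₁ l₂ hU₁ hU₂ (f l₁) hPSmem m₁.2 (hfe ▸ m₂.2) ?_ ?_
        · intro p' hp' hIp'
          have : p' ∈ PSf.filter (fun p => I p l₁) := by
            simp only [Finset.mem_filter]; exact ⟨by simpa [hPSf] using hp', hIp'⟩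
          rw [hfeq l₁ h₁, Finset.mem_singleton] at this; exact this
        · intro p' hp' hIp'
          have : p' ∈ PSf.filter (fun p => I p l₂) := by
            simp only [Finset.mem_filter]; exact ⟨by simpa [hPSf] using hp', hIp'⟩
          rw [hfeq l₂ h₂, Finset.mem_singleton] at this
          exact this.trans hfe.symm
  have htm : u * (q - 1) ≤ T.card + M.card := by
    have hdisjTM : Disjoint T M := by
      rw [hT, hM, Finset.disjoint_filter]
      rintro l _ h1 h2
      omega
    have hunion : T ∪ M = Lu.filter (fun l => 1 ≤ n l) := by
      ext l
      simp only [hT, hM, Finset.mem_union, Finset.mem_filter]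
      constructor
      · rintro (⟨h1, h2⟩ | ⟨h1, h2⟩) <;> exact ⟨h1, by omega⟩
      · rintro ⟨h1, h2⟩
        rcases Nat.lt_or_ge (n l) 2 with h | h
        · exact Or.inl ⟨h1, by omega⟩
        · exact Or.inr ⟨h1, h⟩
    have hTM : T.card + M.card = (Lu.filter (fun l => 1 ≤ n l)).card := by
      rw [← hunion, Finset.card_union_of_disjoint hdisjTM]
    rw [hTM]
    have hfib : ∀ d : Fin q, (Finset.univ.filter (fun l : B => dir l = d)).card = q := by
      intro d
      have := hfiber d
      rwa [Set.ncard_eq_toFinset_card', Set.toFinset_setOf] at this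
    have hpart : (Lu.filter (fun l => 1 ≤ n l)).card =
        ∑ d ∈ Uf, ((Lu.filter (fun l => 1 ≤ n l)).filter (fun l => dir l = d)).card := by
      apply Finset.card_eq_sum_card_fiberwise
      intro l hl
      have h1 := (Finset.mem_filter.1 hl).1
      have h2 := (Finset.mem_filter.1 h1).2
      simpa [hUf] using h2
    rw [hpart]
    have hbound : ∀ d ∈ Uf, q - 1 ≤
        ((Lu.filter (fun l => 1 ≤ n l)).filter (fun l => dir l = d)).card := by
      intro d hd
      have hdU : d ∈ U := by simpa [hUf] using hd
      set Fd := Finset.univ.filter (fun l : B => dir l = d) with hFd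
      have hsplit : (Fd.filter (fun l => 1 ≤ n l)).card + (Fd.filter (fun l => ¬ 1 ≤ n l)).card
          = Fd.card := Finset.card_filter_add_card_filter_not _
      have hz : (Fd.filter (fun l => ¬ 1 ≤ n l)).card ≤ 1 := by
        apply Finset.card_le_one.2
        intro l₁ h₁ l₂ h₂
        simp only [Finset.mem_filter, hFd, not_le, Nat.lt_one_iff] at h₁ h₂
        have hmiss : ∀ l : B, n l = 0 → ∀ p ∈ PS, ¬ I p l := by
          intro l hl p hp hIpl
          have : p ∈ PSf.filter (fun p => I p l) := by
            simp only [Finset.mem_filter]; exact ⟨by simpa [hPSf] using hp, hIpl⟩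
          rw [show (PSf.filter (fun p => I p l)) = ∅ from Finset.card_eq_zero.1 hl] at this
          exact absurd this (Finset.notMem_empty p)
        exact claim1 d hdU l₁ l₂ h₁.1.2 h₂.1.2 (hmiss l₁ h₁.2) (hmiss l₂ h₂.2)
      have heq : (Lu.filter (fun l => 1 ≤ n l)).filter (fun l => dir l = d)
          = Fd.filter (fun l => 1 ≤ n l) := by
        ext l
        simp only [hLu, hFd, Finset.mem_filter, Finset.mem_univ, true_and]
        constructor
        · rintro ⟨⟨_, h2⟩, h3⟩; exact ⟨h3, h2⟩
        · rintro ⟨h1, h2⟩; exact ⟨⟨by rw [h1]; exact hdU, h2⟩, h1⟩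
      rw [heq]
      have := hfib d
      rw [← hFd] at this
      omega
    calc u * (q - 1) = ∑ _d ∈ Uf, (q - 1) := by rw [Finset.sum_const, smul_eq_mul]
    _ ≤ _ := Finset.sum_le_sum hbound
  have hsum_lb : T.card + 2 * M.card ≤ ∑ l ∈ Lu, n l := by
    have hTsub : T ⊆ Lu := Finset.filter_subset _ _
    have hMsub : M ⊆ Lu := Finset.filter_subset _ _
    have hdisj : Disjoint T M := by
      rw [hT, hM, Finset.disjoint_filter]
      rintro l _ h1 h2
      omega
    have hsub : T ∪ M ⊆ Lu := Finset.union_subset hTsub hMsub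
    calc T.card + 2 * M.card = ∑ l ∈ T, 1 + ∑ l ∈ M, 2 := by
          simp [Finset.sum_const, smul_eq_mul, mul_comm]
    _ ≤ ∑ l ∈ T, n l + ∑ l ∈ M, n l := by
          gcongr with l hl l hl
          · exact le_of_eq ((Finset.mem_filter.1 hl).2).symm
          · exact (Finset.mem_filter.1 hl).2
    _ = ∑ l ∈ T ∪ M, n l := (Finset.sum_union hdisj).symm
    _ ≤ ∑ l ∈ Lu, n l := Finset.sum_le_sum_of_subset hsub
  have key : 2 * u * (q - 1) ≤ s * (u + 1) := by
    have h1 : T.card + 2 * M.card ≤ s * u := hinc ▸ hsum_lb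
    nlinarith [hts, htm]
  have hsPS : PS.ncard = s := by rw [hs, hPSf, Set.ncard_eq_toFinset_card']
  have hsU : U.ncard = u := by rw [huset, hUf, Set.ncard_eq_toFinset_card']
  rw [hsPS, hsU, ge_iff_le, div_mul_eq_mul_div, div_le_iff₀ (by positivity)]
  have hcast : ((q - 1 : ℕ) : ℝ) = (q : ℝ) - 1 := by
    rw [Nat.cast_sub (by omega)]; norm_num
  have key' : (2 * u * (q - 1) : ℕ) ≤ ((s * (u + 1) : ℕ)) := key
  have := (Nat.cast_le (α := ℝ)).2 key'
  push_cast [hcast] at this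
  nlinarith [this]

end Count

/-! ### The resolving claims -/

section Claims
variable {Pt Ln : Type*} [Fintype Pt] [Fintype Ln] {q : ℕ}
  {I : Pt → Ln → Prop} {dir : Ln → Fin q} {cls : Pt → Fin q}

omit [Fintype Ln] in
lemma exists_dist3 (hq : 2 ≤ q) (hline : ∀ l, {p | I p l}.ncard = q)
    (h8 : ∀ p l, ¬ I p l →
      (∃! l', I p l' ∧ ∀ p', ¬ (I p' l ∧ I p' l')) ∧
      (∃! p', I p' l ∧ ∀ l', ¬ (I p l' ∧ I p' l')))
    {p : Pt} {l : Ln} (h : ¬ I p l) :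
    ∃ p' l', I p' l ∧ I p' l' ∧ I p l' := by
  obtain ⟨-, ⟨p₀, hp₀, hp₀u⟩⟩ := h8 p l h
  have h2 : 1 < {p' | I p' l}.ncard := by rw [hline l]; omega
  obtain ⟨a, b, ha, hb, hab⟩ := (Set.one_lt_ncard_iff (Set.toFinite _)).1 h2
  have hex : ∃ c, I c l ∧ c ≠ p₀ := by
    by_cases haa : a = p₀
    · exact ⟨b, hb, fun hbb => hab (haa.trans hbb.symm)⟩
    · exact ⟨a, ha, haa⟩
  obtain ⟨c, hc, hcp⟩ := hex
  have hnc : ¬ (I c l ∧ ∀ l', ¬ (I p l' ∧ I c l')) := fun hcon => hcp (hp₀u c hcon)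
  push_neg at hnc
  obtain ⟨l', hpl', hcl'⟩ := hnc hc
  exact ⟨c, l', hc, hcl', hpl'⟩

omit [Fintype Pt] [Fintype Ln] in
lemma meet_of_dir_ne
    (hdir : ∀ l₁ l₂ : Ln, dir l₁ = dir l₂ ↔ (l₁ = l₂ ∨ ∀ p, ¬ (I p l₁ ∧ I p l₂)))
    {l₁ l₂ : Ln} (h : dir l₁ ≠ dir l₂) : l₁ ≠ l₂ ∧ ∃ p, I p l₁ ∧ I p l₂ := by
  have hn : ¬ (l₁ = l₂ ∨ ∀ p, ¬ (I p l₁ ∧ I p l₂)) := fun hor => h ((hdir l₁ l₂).2 hor)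
  push_neg at hn
  obtain ⟨h1, h2⟩ := hn
  obtain ⟨p, hp⟩ := h2
  exact ⟨h1, p, hp⟩

omit [Fintype Pt] [Fintype Ln] in
lemma meet_of_cls_ne
    (hcls : ∀ p₁ p₂ : Pt, cls p₁ = cls p₂ ↔ (p₁ = p₂ ∨ ∀ l, ¬ (I p₁ l ∧ I p₂ l)))
    {p₁ p₂ : Pt} (h : cls p₁ ≠ cls p₂) : p₁ ≠ p₂ ∧ ∃ l, I p₁ l ∧ I p₂ l := by
  have hn : ¬ (p₁ = p₂ ∨ ∀ l, ¬ (I p₁ l ∧ I p₂ l)) := fun hor => h ((hcls p₁ p₂).2 hor)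
  push_neg at hn
  obtain ⟨h1, h2⟩ := hn
  obtain ⟨l, hl⟩ := h2
  exact ⟨h1, l, hl⟩

omit [Fintype Ln] in
lemma claimL1 (hq : 2 ≤ q) (hline : ∀ l, {p | I p l}.ncard = q)
    (hdir : ∀ l₁ l₂ : Ln, dir l₁ = dir l₂ ↔ (l₁ = l₂ ∨ ∀ p, ¬ (I p l₁ ∧ I p l₂)))
    (h8 : ∀ p l, ¬ I p l →
      (∃! l', I p l' ∧ ∀ p', ¬ (I p' l ∧ I p' l')) ∧
      (∃! p', I p' l ∧ ∀ l', ¬ (I p l' ∧ I p' l')))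
    (PS : Set Pt) (LS : Set Ln)
    (hres : IsResolvingSet (IncGraph I) (Sum.inl '' PS ∪ Sum.inr '' LS)) :
    ∀ d ∈ {d : Fin q | ∀ l ∈ LS, dir l ≠ d}, ∀ l1 l2 : Ln, dir l1 = d → dir l2 = d →
      (∀ p ∈ PS, ¬ I p l1) → (∀ p ∈ PS, ¬ I p l2) → l1 = l2 := by
  intro d hd l1 l2 hd1 hd2 hm1 hm2
  have := hres (Sum.inr l1) (Sum.inr l2) ?_
  · exact Sum.inr.inj this
  rintro s (⟨p, hp, rfl⟩ | ⟨l, hl, rfl⟩)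
  · obtain ⟨p₁, l₁', a1, b1, c1⟩ := exists_dist3 hq hline h8 (hm1 p hp)
    obtain ⟨p₂, l₂', a2, b2, c2⟩ := exists_dist3 hq hline h8 (hm2 p hp)
    rw [dist_lp_non (hm1 p hp) a1 b1 c1, dist_lp_non (hm2 p hp) a2 b2 c2]
  · have h1 : dir l1 ≠ dir l := by rw [hd1]; exact fun h => hd l hl h.symm
    have h2 : dir l2 ≠ dir l := by rw [hd2]; exact fun h => hd l hl h.symm
    obtain ⟨hne1, p1, hp1a, hp1b⟩ := meet_of_dir_ne hdir h1
    obtain ⟨hne2, p2, hp2a, hp2b⟩ := meet_of_dir_ne hdir h2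
    rw [dist_ll hne1 p1 hp1a hp1b, dist_ll hne2 p2 hp2a hp2b]

omit [Fintype Ln] in
lemma claimL2 (hq : 2 ≤ q) (hline : ∀ l, {p | I p l}.ncard = q)
    (hdir : ∀ l₁ l₂ : Ln, dir l₁ = dir l₂ ↔ (l₁ = l₂ ∨ ∀ p, ¬ (I p l₁ ∧ I p l₂)))
    (h8 : ∀ p l, ¬ I p l →
      (∃! l', I p l' ∧ ∀ p', ¬ (I p' l ∧ I p' l')) ∧
      (∃! p', I p' l ∧ ∀ l', ¬ (I p l' ∧ I p' l')))
    (PS : Set Pt) (LS : Set Ln)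
    (hres : IsResolvingSet (IncGraph I) (Sum.inl '' PS ∪ Sum.inr '' LS)) :
    ∀ l1 l2 : Ln, dir l1 ∈ {d : Fin q | ∀ l ∈ LS, dir l ≠ d} →
      dir l2 ∈ {d : Fin q | ∀ l ∈ LS, dir l ≠ d} →
      ∀ p ∈ PS, I p l1 → I p l2 →
      (∀ p' ∈ PS, I p' l1 → p' = p) → (∀ p' ∈ PS, I p' l2 → p' = p) → l1 = l2 := by
  intro l1 l2 hU1 hU2 p hp hI1 hI2 htan1 htan2
  have := hres (Sum.inr l1) (Sum.inr l2) ?_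
  · exact Sum.inr.inj this
  rintro s (⟨p', hp', rfl⟩ | ⟨l, hl, rfl⟩)
  · by_cases hpp : p' = p
    · subst hpp
      rw [dist_lp_inc hI1, dist_lp_inc hI2]
    · have hn1 : ¬ I p' l1 := fun h => hpp (htan1 p' hp' h)
      have hn2 : ¬ I p' l2 := fun h => hpp (htan2 p' hp' h)
      obtain ⟨p₁, l₁', a1, b1, c1⟩ := exists_dist3 hq hline h8 hn1
      obtain ⟨p₂, l₂', a2, b2, c2⟩ := exists_dist3 hq hline h8 hn2
      rw [dist_lp_non hn1 a1 b1 c1, dist_lp_non hn2 a2 b2 c2]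
  · have h1 : dir l1 ≠ dir l := fun h => hU1 l hl h.symm
    have h2 : dir l2 ≠ dir l := fun h => hU2 l hl h.symm
    obtain ⟨hne1, p1, hp1a, hp1b⟩ := meet_of_dir_ne hdir h1
    obtain ⟨hne2, p2, hp2a, hp2b⟩ := meet_of_dir_ne hdir h2
    rw [dist_ll hne1 p1 hp1a hp1b, dist_ll hne2 p2 hp2a hp2b]

omit [Fintype Ln] in
lemma claimP1 (hq : 2 ≤ q) (hline : ∀ l, {p | I p l}.ncard = q)
    (hcls : ∀ p₁ p₂ : Pt, cls p₁ = cls p₂ ↔ (p₁ = p₂ ∨ ∀ l, ¬ (I p₁ l ∧ I p₂ l)))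
    (h8 : ∀ p l, ¬ I p l →
      (∃! l', I p l' ∧ ∀ p', ¬ (I p' l ∧ I p' l')) ∧
      (∃! p', I p' l ∧ ∀ l', ¬ (I p l' ∧ I p' l')))
    (PS : Set Pt) (LS : Set Ln)
    (hres : IsResolvingSet (IncGraph I) (Sum.inl '' PS ∪ Sum.inr '' LS)) :
    ∀ d ∈ {d : Fin q | ∀ p ∈ PS, cls p ≠ d}, ∀ p1 p2 : Pt, cls p1 = d → cls p2 = d →
      (∀ l ∈ LS, ¬ I p1 l) → (∀ l ∈ LS, ¬ I p2 l) → p1 = p2 := by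
  intro d hd p1 p2 hd1 hd2 hm1 hm2
  have := hres (Sum.inl p1) (Sum.inl p2) ?_
  · exact Sum.inl.inj this
  rintro s (⟨p, hp, rfl⟩ | ⟨l, hl, rfl⟩)
  · have h1 : cls p1 ≠ cls p := by rw [hd1]; exact fun h => hd p hp h.symm
    have h2 : cls p2 ≠ cls p := by rw [hd2]; exact fun h => hd p hp h.symm
    obtain ⟨hne1, l1, hl1a, hl1b⟩ := meet_of_cls_ne hcls h1
    obtain ⟨hne2, l2, hl2a, hl2b⟩ := meet_of_cls_ne hcls h2
    rw [dist_pp hne1 l1 hl1a hl1b, dist_pp hne2 l2 hl2a hl2b]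
  · obtain ⟨p₁, l₁', a1, b1, c1⟩ := exists_dist3 hq hline h8 (hm1 l hl)
    obtain ⟨p₂, l₂', a2, b2, c2⟩ := exists_dist3 hq hline h8 (hm2 l hl)
    rw [dist_pl_non (hm1 l hl) a1 b1 c1, dist_pl_non (hm2 l hl) a2 b2 c2]

omit [Fintype Ln] in
lemma claimP2 (hq : 2 ≤ q) (hline : ∀ l, {p | I p l}.ncard = q)
    (hcls : ∀ p₁ p₂ : Pt, cls p₁ = cls p₂ ↔ (p₁ = p₂ ∨ ∀ l, ¬ (I p₁ l ∧ I p₂ l)))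
    (h8 : ∀ p l, ¬ I p l →
      (∃! l', I p l' ∧ ∀ p', ¬ (I p' l ∧ I p' l')) ∧
      (∃! p', I p' l ∧ ∀ l', ¬ (I p l' ∧ I p' l')))
    (PS : Set Pt) (LS : Set Ln)
    (hres : IsResolvingSet (IncGraph I) (Sum.inl '' PS ∪ Sum.inr '' LS)) :
    ∀ p1 p2 : Pt, cls p1 ∈ {d : Fin q | ∀ p ∈ PS, cls p ≠ d} →
      cls p2 ∈ {d : Fin q | ∀ p ∈ PS, cls p ≠ d} →
      ∀ l ∈ LS, I p1 l → I p2 l →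
      (∀ l' ∈ LS, I p1 l' → l' = l) → (∀ l' ∈ LS, I p2 l' → l' = l) → p1 = p2 := by
  intro p1 p2 hU1 hU2 l hl hI1 hI2 htan1 htan2
  have := hres (Sum.inl p1) (Sum.inl p2) ?_
  · exact Sum.inl.inj this
  rintro s (⟨p, hp, rfl⟩ | ⟨l', hl', rfl⟩)
  · have h1 : cls p1 ≠ cls p := fun h => hU1 p hp h.symm
    have h2 : cls p2 ≠ cls p := fun h => hU2 p hp h.symm
    obtain ⟨hne1, l1, hl1a, hl1b⟩ := meet_of_cls_ne hcls h1
    obtain ⟨hne2, l2, hl2a, hl2b⟩ := meet_of_cls_ne hcls h2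
    rw [dist_pp hne1 l1 hl1a hl1b, dist_pp hne2 l2 hl2a hl2b]
  · by_cases hll : l' = l
    · subst hll
      rw [dist_pl_inc hI1, dist_pl_inc hI2]
    · have hn1 : ¬ I p1 l' := fun h => hll (htan1 l' hl' h)
      have hn2 : ¬ I p2 l' := fun h => hll (htan2 l' hl' h)
      obtain ⟨p₁, l₁', a1, b1, c1⟩ := exists_dist3 hq hline h8 hn1
      obtain ⟨p₂, l₂', a2, b2, c2⟩ := exists_dist3 hq hline h8 hn2
      rw [dist_pl_non hn1 a1 b1 c1, dist_pl_non hn2 a2 b2 c2]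

end Claims

/-- Let `S = P_S ∪ L_S` be a resolving set for a biaffine plane of order `q`, let `u` be
the number of uncovered directions (parallel classes containing no line of `L_S`) and `c`
the number of unblocked non-adjacency classes (containing no point of `P_S`). Then
`|P_S| ≥ (u/(u+1))·2(q-1)` and `|L_S| ≥ (c/(c+1))·2(q-1)`. -/

theorem biaffine_uncovered_bounds {Pt Ln : Type*} [Fintype Pt] [Fintype Ln]
    (q : ℕ) (hq : 2 ≤ q) (I : Pt → Ln → Prop) (dir : Ln → Fin q) (cls : Pt → Fin q)
    (hBA : IsBiaffinePlane q I dir cls)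
    (PS : Set Pt) (LS : Set Ln)
    (hres : IsResolvingSet (IncGraph I) (Sum.inl '' PS ∪ Sum.inr '' LS))
    (u c : ℕ)
    (hu : u = {d : Fin q | ∀ l ∈ LS, dir l ≠ d}.ncard)
    (hc : c = {d : Fin q | ∀ p ∈ PS, cls p ≠ d}.ncard) :
    (PS.ncard : ℝ) ≥ (u / (u + 1)) * (2 * (q - 1)) ∧
    (LS.ncard : ℝ) ≥ (c / (c + 1)) * (2 * (q - 1)) := by
  obtain ⟨hPt, hLn, h3, h4, h5, h6, h7, h8⟩ := hBA
  have h8' : ∀ (l : Ln) (p : Pt), ¬ I p l →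
      (∃! p', I p' l ∧ ∀ l', ¬ (I p l' ∧ I p' l')) ∧
      (∃! l', I p l' ∧ ∀ p', ¬ (I p' l ∧ I p' l')) := by
    intro l p h
    exact ⟨(h8 p l h).2, (h8 p l h).1⟩
  constructor
  · have := counting_core (A := Pt) (B := Ln) (I := I) (dir := dir) hq PS
      {d : Fin q | ∀ l ∈ LS, dir l ≠ d}
      (fiber_card (by omega) hPt hLn h3 h6)
      (thru_unique h4 h6)
      (claimL1 hq h3 h6 h8 PS LS hres)
      (claimL2 hq h3 h6 h8 PS LS hres)
    rw [hu]
    exact this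
  · have := counting_core (A := Ln) (B := Pt) (I := fun l p => I p l) (dir := cls) hq LS
      {d : Fin q | ∀ p ∈ PS, cls p ≠ d}
      (fiber_card (by omega) hLn hPt h4 h7)
      (thru_unique h3 h7)
      (claimP1 hq h3 h7 h8 PS LS hres)
      (claimP2 hq h3 h7 h8 PS LS hres)
    rw [hc]
    exact this
end

section
/- In W(q), let a₁, a₂, a₃ be pairwise skew lines of W(q) spanning a hyperbolic quadric H of PG(3,q), and let a₄ be a line of W(q) disjoint from H. Then the set of all points of a₁ ∪ a₂ ∪ a₃ ∪ a₄ (of size 4q + 4) resolves all points of W(q): any two distinct points of W(q) have distinct distance vectors to this set in the incidence graph. -/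
open Set

noncomputable section

/-- The standard symplectic (alternating, nondegenerate) form on `F_q⁴`, defining the
null polarity whose self-conjugate lines are the lines of `W(q)`. -/
def symp {p n : ℕ} [Fact p.Prime] (x y : Fin 4 → GaloisField p n) : GaloisField p n :=
  x 0 * y 1 - x 1 * y 0 + x 2 * y 3 - x 3 * y 2

/-- Points of `W(q)`: all points of `PG(3,q)`, `q = p^n`. -/
abbrev WPoint (p n : ℕ) [Fact p.Prime] :=
  Projectivization (GaloisField p n) (Fin 4 → GaloisField p n)

/-- Lines of `W(q)`: the totally isotropic (self-conjugate) projective lines, i.e. the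
`2`-dimensional subspaces on which the symplectic form vanishes. -/
def WLine (p n : ℕ) [Fact p.Prime] :=
  {W : Submodule (GaloisField p n) (Fin 4 → GaloisField p n) //
    Module.finrank (GaloisField p n) W = 2 ∧ ∀ x ∈ W, ∀ y ∈ W, symp x y = 0}

/-- Incidence in `W(q)`. -/
def wIncid {p n : ℕ} [Fact p.Prime] (P : WPoint p n) (l : WLine p n) : Prop :=
  P.rep ∈ l.1


namespace WqAux
variable {p n : ℕ} [Fact p.Prime]

noncomputable def sympB : LinearMap.BilinForm (GaloisField p n) (Fin 4 → GaloisField p n) :=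
  LinearMap.mk₂ _ symp
    (by intros; simp only [symp, Pi.add_apply]; ring)
    (by intros; simp only [symp, Pi.smul_apply, smul_eq_mul]; ring)
    (by intros; simp only [symp, Pi.add_apply]; ring)
    (by intros; simp only [symp, Pi.smul_apply, smul_eq_mul]; ring)

@[simp] lemma sympB_apply (x y : Fin 4 → GaloisField p n) : sympB x y = symp x y := rfl

lemma symp_self (x : Fin 4 → GaloisField p n) : symp x x = 0 := by simp [symp]; ring

lemma symp_skew (x y : Fin 4 → GaloisField p n) : symp x y = - symp y x := by simp [symp]; ring

lemma sympB_refl : (sympB (p := p) (n := n)).IsRefl := by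
  intro x y h
  simp only [sympB_apply] at *
  rw [symp_skew, h, neg_zero]

lemma sympB_nondeg : (sympB (p := p) (n := n)).Nondegenerate := by
  refine ⟨fun m h => ?_, fun m h => ?_⟩
  all_goals
  have h0 := h (Pi.single 1 1)
  have h1 := h (Pi.single 0 1)
  have h2 := h (Pi.single 3 1)
  have h3 := h (Pi.single 2 1)
  simp only [sympB_apply, symp, Pi.single_apply] at h0 h1 h2 h3
  norm_num at h0 h1 h2 h3
  funext i
  fin_cases i <;> simp_all

variable {p n : ℕ} [Fact p.Prime]

lemma range_pair (c x : Fin 4 → GaloisField p n) : Set.range ![c, x] = {c, x} := by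
  simp [Matrix.range_cons, Matrix.range_empty, Set.singleton_union]
  exact Set.pair_comm x c

lemma symp_combo (a b a' b' : GaloisField p n) (c x : Fin 4 → GaloisField p n) :
    symp (a•c+b•x) (a'•c+b'•x) = (a*b' - b*a') * symp c x := by
  simp only [symp, Pi.add_apply, Pi.smul_apply, smul_eq_mul]; ring

/-- construct a `WLine` from an independent symp-orthogonal pair -/
def mkLine (c x : Fin 4 → GaloisField p n) (hind : LinearIndependent (GaloisField p n) ![c, x])
    (hperp : symp c x = 0) : WLine p n := by
  refine ⟨Submodule.span _ {c, x}, ?_, ?_⟩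
  · rw [show ({c, x} : Set _) = Set.range ![c, x] from (range_pair c x).symm]
    rw [finrank_span_eq_card hind]
    simp
  · intro u hu v hv
    rw [Submodule.mem_span_pair] at hu hv
    obtain ⟨a, b, rfl⟩ := hu
    obtain ⟨a', b', rfl⟩ := hv
    rw [symp_combo, hperp, mul_zero]

lemma c_mem_mkLine (c x : Fin 4 → GaloisField p n) (hind) (hperp) :
    c ∈ (mkLine c x hind hperp).1 :=
  Submodule.subset_span (by simp)

lemma x_mem_mkLine (c x : Fin 4 → GaloisField p n) (hind) (hperp) :
    x ∈ (mkLine c x hind hperp).1 :=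
  Submodule.subset_span (by simp)

/-- the representative of `mk v` lies in `W` iff `v` does -/
lemma rep_mk_mem_iff {W : Submodule (GaloisField p n) (Fin 4 → GaloisField p n)}
    {v : Fin 4 → GaloisField p n} (hv : v ≠ 0) :
    (Projectivization.mk (GaloisField p n) v hv).rep ∈ W ↔ v ∈ W := by
  have h := Projectivization.mk_rep (Projectivization.mk (GaloisField p n) v hv)
  rw [Projectivization.mk_eq_mk_iff] at h
  obtain ⟨a, ha⟩ := h
  constructor
  · intro hw
    have := W.smul_mem (↑a⁻¹ : GaloisField p n) hw
    rw [← ha] at this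
    rwa [Units.smul_def, smul_smul, Units.inv_mul, one_smul] at this
  · intro hw
    rw [← ha]
    exact W.smul_mem _ hw

lemma exists_perp_in_line (c : Fin 4 → GaloisField p n) (l : WLine p n) :
    ∃ x, x ∈ l.1 ∧ x ≠ 0 ∧ symp c x = 0 := by
  classical
  set f := (sympB (p := p) (n := n) c).domRestrict l.1 with hf
  have hrn := LinearMap.finrank_range_add_finrank_ker f
  have hr1 : Module.finrank (GaloisField p n) (LinearMap.range f) ≤ 1 := by
    simpa using Submodule.finrank_le (LinearMap.range f)
  have hker : 0 < Module.finrank (GaloisField p n) (LinearMap.ker f) := by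
    rw [l.2.1] at hrn; omega
  replace hker := Module.nontrivial_of_finrank_pos hker
  obtain ⟨⟨x, hx⟩, hxne⟩ := exists_ne (0 : LinearMap.ker f)
  refine ⟨(x : Fin 4 → GaloisField p n), x.2, ?_, ?_⟩
  · intro h0
    apply hxne
    apply Subtype.ext
    apply Subtype.ext
    exact h0
  · have := hx
    simp only [hf, LinearMap.mem_ker, LinearMap.domRestrict_apply] at this
    simpa using this

lemma exists_line_through (c : Fin 4 → GaloisField p n) (hc : c ≠ 0) :
    ∃ l : WLine p n, c ∈ l.1 := by
  classical
  set f := (sympB (p := p) (n := n) c) with hf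
  have hrn := LinearMap.finrank_range_add_finrank_ker f
  have hr1 : Module.finrank (GaloisField p n) (LinearMap.range f) ≤ 1 := by
    simpa using Submodule.finrank_le (LinearMap.range f)
  have hV : Module.finrank (GaloisField p n) (Fin 4 → GaloisField p n) = 4 :=
    Module.finrank_fin_fun _
  rw [hV] at hrn
  have hker : 3 ≤ Module.finrank (GaloisField p n) (LinearMap.ker f) := by omega
  have hnle : ¬ (LinearMap.ker f ≤ Submodule.span (GaloisField p n) {c}) := by
    intro hle
    have := Submodule.finrank_mono hle
    rw [finrank_span_singleton hc] at this
    omega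
  obtain ⟨x, hxker, hxspan⟩ := Set.not_subset.1 hnle
  have hind : LinearIndependent (GaloisField p n) ![c, x] := by
    rw [LinearIndependent.pair_iff' hc]
    intro a ha
    exact hxspan (ha ▸ Submodule.smul_mem _ a (Submodule.mem_span_singleton_self c))
  have hperp : symp c x = 0 := by simpa [hf] using hxker
  exact ⟨mkLine c x hind hperp, c_mem_mkLine c x hind hperp⟩

lemma exists_trace (C : WPoint p n) (a : WLine p n) (h : C.rep ∉ a.1) :
    ∃ x, x ∈ a.1 ∧ x ≠ 0 ∧ symp C.rep x = 0 ∧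
      ∃ m : WLine p n, C.rep ∈ m.1 ∧ x ∈ m.1 := by
  obtain ⟨x, hxa, hxne, hperp⟩ := exists_perp_in_line C.rep a
  have hind : LinearIndependent (GaloisField p n) ![C.rep, x] := by
    rw [LinearIndependent.pair_iff' C.rep_nonzero]
    intro t ht
    rcases eq_or_ne t 0 with rfl | htne
    · exact hxne (by simpa using ht.symm)
    · exact h (by
        have : C.rep = t⁻¹ • x := by rw [← ht, smul_smul, inv_mul_cancel₀ htne, one_smul]
        rw [this]; exact a.1.smul_mem _ hxa)
  exact ⟨x, hxa, hxne, hperp,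
    mkLine C.rep x hind hperp, c_mem_mkLine _ _ hind hperp, x_mem_mkLine _ _ hind hperp⟩

lemma adj_pl {C : WPoint p n} {l : WLine p n} (h : wIncid C l) :
    (IncGraph (wIncid (p := p) (n := n))).Adj (Sum.inl C) (Sum.inr l) :=
  Or.inl ⟨C, l, rfl, rfl, h⟩

lemma adj_lp {C : WPoint p n} {l : WLine p n} (h : wIncid C l) :
    (IncGraph (wIncid (p := p) (n := n))).Adj (Sum.inr l) (Sum.inl C) :=
  Or.inr ⟨C, l, rfl, rfl, h⟩

lemma reachable_of_line {C A : WPoint p n} {l : WLine p n} (hC : wIncid C l) (hA : wIncid A l) :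
    (IncGraph (wIncid (p := p) (n := n))).Reachable (Sum.inl C) (Sum.inl A) :=
  ((adj_pl hC).reachable).trans (adj_lp hA).reachable

lemma reach_points (C A : WPoint p n) :
    (IncGraph (wIncid (p := p) (n := n))).Reachable (Sum.inl C) (Sum.inl A) := by
  obtain ⟨l₀, hl₀⟩ := exists_line_through A.rep A.rep_nonzero
  have hA : wIncid A l₀ := hl₀
  by_cases hC : wIncid C l₀
  · exact reachable_of_line hC hA
  · obtain ⟨x, hxa, hxne, hperp, m, hcm, hxm⟩ := exists_trace C l₀ hC
    have hXl : wIncid (Projectivization.mk (GaloisField p n) x hxne) l₀ :=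
      (rep_mk_mem_iff hxne).2 hxa
    have hXm : wIncid (Projectivization.mk (GaloisField p n) x hxne) m :=
      (rep_mk_mem_iff hxne).2 hxm
    exact (reachable_of_line (show wIncid C m from hcm) hXm).trans (reachable_of_line hXl hA)

lemma dist_pp_eq_zero_iff (C A : WPoint p n) :
    (IncGraph (wIncid (p := p) (n := n))).dist (Sum.inl C) (Sum.inl A) = 0 ↔ C = A := by
  rw [(reach_points C A).dist_eq_zero_iff]
  simp

lemma dist_eq_two_iff (C A : WPoint p n) :
    (IncGraph (wIncid (p := p) (n := n))).dist (Sum.inl C) (Sum.inl A) = 2 ↔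
      (C ≠ A ∧ ∃ l : WLine p n, wIncid C l ∧ wIncid A l) := by
  constructor
  · intro h
    have hne : C ≠ A := by
      rintro rfl
      rw [SimpleGraph.dist_self] at h
      exact two_ne_zero h.symm
    refine ⟨hne, ?_⟩
    obtain ⟨q, hq⟩ := SimpleGraph.exists_walk_of_dist_ne_zero (by rw [h]; norm_num)
    rw [h] at hq
    cases q with
    | nil => simp at hq
    | @cons _ b _ hadj q1 =>
      cases q1 with
      | nil => simp at hq
      | @cons _ v _ hadj2 q2 =>
        have hq2 : q2.length = 0 := by
          simp only [SimpleGraph.Walk.length_cons] at hq; omega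
        have hv := SimpleGraph.Walk.eq_of_length_eq_zero hq2
        subst hv
        rcases hadj with ⟨P, l, hP, hb, hI⟩ | ⟨P, l, hb', hP, hI⟩
        · subst hb
          rcases hadj2 with ⟨P', l', h1, h2, hI'⟩ | ⟨P', l', h1, h2, hI'⟩
          · simp at h1
          · rw [Sum.inr.injEq] at h1
            rw [Sum.inl.injEq] at hP h2
            subst h1; subst hP; subst h2
            exact ⟨l, hI, hI'⟩
        · simp at hb'
  · rintro ⟨hne, l, hC, hA⟩
    have hle : (IncGraph (wIncid (p := p) (n := n))).dist (Sum.inl C) (Sum.inl A) ≤ 2 := by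
      have := SimpleGraph.dist_le
        (SimpleGraph.Walk.cons (adj_pl hC) (SimpleGraph.Walk.cons (adj_lp hA) SimpleGraph.Walk.nil))
      simpa using this
    have h0 : (IncGraph (wIncid (p := p) (n := n))).dist (Sum.inl C) (Sum.inl A) ≠ 0 := by
      rw [ne_eq, dist_pp_eq_zero_iff]; exact hne
    have h1 : (IncGraph (wIncid (p := p) (n := n))).dist (Sum.inl C) (Sum.inl A) ≠ 1 := by
      rw [ne_eq, SimpleGraph.dist_eq_one_iff_adj]
      rintro (⟨_, _, _, h', _⟩ | ⟨_, _, h', _, _⟩) <;> simp at h'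
    omega

lemma line_points_ncard (hn : 0 < n) (a : WLine p n) :
    {x : WPoint p n | wIncid x a}.ncard = p ^ n + 1 := by
  classical
  let b := Module.finBasisOfFinrankEq (GaloisField p n) a.1 a.2.1
  set u : Fin 4 → GaloisField p n := (b 0 : Fin 4 → GaloisField p n) with hu
  set v : Fin 4 → GaloisField p n := (b 1 : Fin 4 → GaloisField p n) with hv
  have hua : u ∈ a.1 := (b 0).2
  have hva : v ∈ a.1 := (b 1).2
  have hli : LinearIndependent (GaloisField p n)
      (fun i => ((b i : a.1) : Fin 4 → GaloisField p n)) :=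
    b.linearIndependent.map' a.1.subtype (Submodule.ker_subtype _)
  have hind : ∀ s t : GaloisField p n, s • u + t • v = 0 → s = 0 ∧ t = 0 := by
    intro s t hst
    have h := Fintype.linearIndependent_iff.1 hli ![s, t] ?_
    · exact ⟨h 0, h 1⟩
    · rw [Fin.sum_univ_two]
      simpa using hst
  have hspan : ∀ w ∈ a.1, ∃ s t : GaloisField p n, w = s • u + t • v := by
    intro w hw
    refine ⟨b.repr ⟨w, hw⟩ 0, b.repr ⟨w, hw⟩ 1, ?_⟩
    have hsum := b.sum_repr ⟨w, hw⟩
    have h2 : (⟨w, hw⟩ : a.1) = b.repr ⟨w, hw⟩ 0 • b 0 + b.repr ⟨w, hw⟩ 1 • b 1 := by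
      conv_lhs => rw [← hsum, Fin.sum_univ_two]
    have h3 := congrArg Subtype.val h2
    simpa using h3
  have hvne : v ≠ 0 := by
    intro h0
    exact one_ne_zero ((hind 0 1 (by simp [h0])).2)
  have hutne : ∀ t : GaloisField p n, u + t • v ≠ 0 := by
    intro t h0
    exact one_ne_zero ((hind 1 t (by simpa using h0)).1)
  let f : Option (GaloisField p n) → WPoint p n := fun o =>
    Option.rec (Projectivization.mk _ v hvne)
      (fun t => Projectivization.mk _ (u + t • v) (hutne t)) o
  have hrange : {x : WPoint p n | wIncid x a} = Set.range f := by
    ext P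
    simp only [Set.mem_setOf_eq, Set.mem_range, wIncid]
    constructor
    · intro hP
      obtain ⟨s, t, hst⟩ := hspan P.rep hP
      rcases eq_or_ne s 0 with rfl | hs
      · have htne : t ≠ 0 := by
          rintro rfl
          exact P.rep_nonzero (by simpa using hst)
        refine ⟨none, ?_⟩
        show Projectivization.mk _ v hvne = P
        rw [← Projectivization.mk_rep P, Projectivization.mk_eq_mk_iff]
        exact ⟨(Units.mk0 t htne)⁻¹, by
          simp only [Units.smul_def, Units.val_inv_eq_inv_val, Units.val_mk0]
          rw [hst]
          rw [zero_smul, zero_add, smul_smul, inv_mul_cancel₀ htne, one_smul]⟩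
      · refine ⟨some (s⁻¹ * t), ?_⟩
        show Projectivization.mk _ (u + (s⁻¹ * t) • v) _ = P
        rw [← Projectivization.mk_rep P, Projectivization.mk_eq_mk_iff]
        refine ⟨(Units.mk0 s hs)⁻¹, ?_⟩
        simp only [Units.smul_def, Units.val_inv_eq_inv_val, Units.val_mk0]
        rw [hst, smul_add, smul_smul, smul_smul]
        rw [inv_mul_cancel₀ hs, one_smul]
    · rintro ⟨o, rfl⟩
      cases o with
      | none => exact (rep_mk_mem_iff hvne).2 hva
      | some t => exact (rep_mk_mem_iff (hutne t)).2 (a.1.add_mem hua (a.1.smul_mem t hva))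
  have hinj : Function.Injective f := by
    intro o1 o2 h
    cases o1 with
    | none =>
      cases o2 with
      | none => rfl
      | some t =>
        exfalso
        rw [Projectivization.mk_eq_mk_iff] at h
        obtain ⟨A, hA⟩ := h
        rw [Units.smul_def] at hA
        have h0 : ((A : GaloisField p n)) • u + ((A : GaloisField p n) * t - 1) • v = 0 := by
          linear_combination (norm := module) hA
        exact A.ne_zero (hind _ _ h0).1
    | some t =>
      cases o2 with
      | none =>
        exfalso
        rw [Projectivization.mk_eq_mk_iff] at h
        obtain ⟨A, hA⟩ := h
        rw [Units.smul_def] at hA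
        have h0 : (1 : GaloisField p n) • u + (t - (A : GaloisField p n)) • v = 0 := by
          linear_combination (norm := module) -hA
        exact one_ne_zero (hind _ _ h0).1
      | some t' =>
        rw [Projectivization.mk_eq_mk_iff] at h
        obtain ⟨A, hA⟩ := h
        rw [Units.smul_def] at hA
        have h0 : ((A : GaloisField p n) - 1) • u + ((A : GaloisField p n) * t' - t) • v = 0 := by
          linear_combination (norm := module) hA
        obtain ⟨hA1, hA2⟩ := hind _ _ h0
        have hA1' : (A : GaloisField p n) = 1 := by rwa [sub_eq_zero] at hA1
        rw [hA1', one_mul, sub_eq_zero] at hA2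
        rw [hA2]
  rw [hrange, ← Set.image_univ, Set.ncard_image_of_injective _ hinj, Set.ncard_univ,
    Finite.card_option, GaloisField.card p n hn.ne']

instance : Finite (WPoint p n) :=
  Finite.of_surjective
    (fun v : {v : Fin 4 → GaloisField p n // v ≠ 0} => Projectivization.mk _ v.1 v.2)
    (fun P => ⟨⟨P.rep, P.rep_nonzero⟩, P.mk_rep⟩)

lemma symp_smul_right (c x : Fin 4 → GaloisField p n) (t : GaloisField p n) :
    symp c (t • x) = t * symp c x := by
  simp only [symp, Pi.smul_apply, smul_eq_mul]; ring

lemma perp_of_collinear {C X : WPoint p n} {l : WLine p n} (hC : wIncid C l) (hX : wIncid X l) :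
    symp C.rep X.rep = 0 :=
  l.2.2 _ hC _ hX

end WqAux


open WqAux in
/-- Let `a₁, a₂, a₃` be pairwise skew lines of `W(q)` contained in a hyperbolic quadric
`H` of `PG(3,q)` (given by a quadratic form `Q` equivalent to `x₀x₁ + x₂x₃`), and let
`a₄` be a line of `W(q)` disjoint from `H`. Then the `4q + 4` points of
`a₁ ∪ a₂ ∪ a₃ ∪ a₄` resolve all points of `W(q)`: any two points of `W(q)` with equal
distance vectors to this point set (in the incidence graph) coincide. -/
theorem wq_point_semiresolving (p n : ℕ) [Fact p.Prime] (hn : 0 < n)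
    (a₁ a₂ a₃ a₄ : WLine p n)
    (h12 : a₁.1 ⊓ a₂.1 = ⊥) (h13 : a₁.1 ⊓ a₃.1 = ⊥) (h23 : a₂.1 ⊓ a₃.1 = ⊥)
    (Q : (Fin 4 → GaloisField p n) → GaloisField p n)
    (hQhyp : ∃ e : (Fin 4 → GaloisField p n) ≃ₗ[GaloisField p n] (Fin 4 → GaloisField p n),
      ∀ v, Q v = e v 0 * e v 1 + e v 2 * e v 3)
    (hQ1 : ∀ v ∈ a₁.1, Q v = 0) (hQ2 : ∀ v ∈ a₂.1, Q v = 0) (hQ3 : ∀ v ∈ a₃.1, Q v = 0)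
    (hQ4 : ∀ v ∈ a₄.1, v ≠ 0 → Q v ≠ 0) :
    ({x : WPoint p n | wIncid x a₁ ∨ wIncid x a₂ ∨ wIncid x a₃ ∨ wIncid x a₄}.ncard
        = 4 * p ^ n + 4) ∧
    ∀ C C' : WPoint p n,
      (∀ A ∈ {x : WPoint p n | wIncid x a₁ ∨ wIncid x a₂ ∨ wIncid x a₃ ∨ wIncid x a₄},
        (IncGraph (wIncid (p := p) (n := n))).dist (Sum.inl C) (Sum.inl A) =
        (IncGraph (wIncid (p := p) (n := n))).dist (Sum.inl C') (Sum.inl A)) →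
      C = C' := by
  classical
  constructor
  · -- cardinality
    have hset : {x : WPoint p n | wIncid x a₁ ∨ wIncid x a₂ ∨ wIncid x a₃ ∨ wIncid x a₄} =
        {x : WPoint p n | wIncid x a₁} ∪ ({x | wIncid x a₂} ∪ ({x | wIncid x a₃} ∪ {x | wIncid x a₄})) := by
      ext x; simp [Set.mem_union, Set.mem_setOf_eq]
    have hdisj : ∀ ai aj : WLine p n, ai.1 ⊓ aj.1 = ⊥ →
        Disjoint {x : WPoint p n | wIncid x ai} {x : WPoint p n | wIncid x aj} := by
      intro ai aj hij
      rw [Set.disjoint_left]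
      intro x hxi hxj
      have hmem : x.rep ∈ ai.1 ⊓ aj.1 := ⟨hxi, hxj⟩
      rw [hij] at hmem
      exact x.rep_nonzero hmem
    have hd4 : ∀ ai : WLine p n, (∀ v ∈ ai.1, Q v = 0) →
        Disjoint {x : WPoint p n | wIncid x ai} {x : WPoint p n | wIncid x a₄} := by
      intro ai hQi
      rw [Set.disjoint_left]
      intro x hxi hx4
      exact hQ4 x.rep hx4 x.rep_nonzero (hQi x.rep hxi)
    rw [hset]
    rw [Set.ncard_union_eq (by
        refine Set.disjoint_union_right.2 ⟨hdisj _ _ h12, Set.disjoint_union_right.2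
          ⟨hdisj _ _ h13, hd4 _ hQ1⟩⟩) (Set.toFinite _) (Set.toFinite _)]
    rw [Set.ncard_union_eq (Set.disjoint_union_right.2 ⟨hdisj _ _ h23, hd4 _ hQ2⟩)
      (Set.toFinite _) (Set.toFinite _)]
    rw [Set.ncard_union_eq (hd4 _ hQ3) (Set.toFinite _) (Set.toFinite _)]
    rw [line_points_ncard hn a₁, line_points_ncard hn a₂, line_points_ncard hn a₃,
      line_points_ncard hn a₄]
    ring
  · -- resolving
    intro C C' hCC'
    by_cases hCin : wIncid C a₁ ∨ wIncid C a₂ ∨ wIncid C a₃ ∨ wIncid C a₄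
    · have h := hCC' C hCin
      rw [SimpleGraph.dist_self] at h
      exact ((dist_pp_eq_zero_iff C' C).1 h.symm).symm
    by_cases hC'in : wIncid C' a₁ ∨ wIncid C' a₂ ∨ wIncid C' a₃ ∨ wIncid C' a₄
    · have h := hCC' C' hC'in
      rw [SimpleGraph.dist_self] at h
      exact (dist_pp_eq_zero_iff C C').1 h
    push_neg at hCin hC'in
    obtain ⟨hC1, hC2, hC3, hC4⟩ := hCin
    obtain ⟨hC'1, hC'2, hC'3, hC'4⟩ := hC'in
    -- common trace points
    have key : ∀ ai : WLine p n, ¬ wIncid C ai → ¬ wIncid C' ai →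
        (∀ X : WPoint p n, wIncid X ai →
          (wIncid X a₁ ∨ wIncid X a₂ ∨ wIncid X a₃ ∨ wIncid X a₄)) →
        ∃ x, x ∈ ai.1 ∧ x ≠ 0 ∧ symp C.rep x = 0 ∧ symp C'.rep x = 0 := by
      intro ai hCi hC'i hmem
      obtain ⟨x, hxa, hxne, hperp, m, hcm, hxm⟩ := exists_trace C ai hCi
      set X := Projectivization.mk (GaloisField p n) x hxne with hX
      have hXa : wIncid X ai := (rep_mk_mem_iff hxne).2 hxa
      have hXm : wIncid X m := (rep_mk_mem_iff hxne).2 hxm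
      have hCne : C ≠ X := by rintro rfl; exact hCi hXa
      have hd2 : (IncGraph (wIncid (p := p) (n := n))).dist (Sum.inl C) (Sum.inl X) = 2 :=
        (dist_eq_two_iff C X).2 ⟨hCne, m, hcm, hXm⟩
      have hd2' := hCC' X (hmem X hXa)
      rw [hd2] at hd2'
      obtain ⟨-, l', hC'l, hXl⟩ := (dist_eq_two_iff C' X).1 hd2'.symm
      have hperp' : symp C'.rep X.rep = 0 := perp_of_collinear hC'l hXl
      -- transfer from X.rep to x
      have hrep : ∃ A : (GaloisField p n)ˣ, A • x = X.rep := by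
        have h5 := Projectivization.mk_rep X
        rw [hX] at h5
        rw [Projectivization.mk_eq_mk_iff] at h5
        exact h5
      obtain ⟨A, hA⟩ := hrep
      have hperp'x : symp C'.rep x = 0 := by
        have h6 := hperp'
        rw [← hA, Units.smul_def, symp_smul_right] at h6
        exact (mul_eq_zero.1 h6).resolve_left A.ne_zero
      exact ⟨x, hxa, hxne, hperp, hperp'x⟩
    obtain ⟨x₁, hx₁a, hx₁ne, hp₁, hp₁'⟩ := key a₁ hC1 hC'1 (fun X h => Or.inl h)
    obtain ⟨x₂, hx₂a, hx₂ne, hp₂, hp₂'⟩ := key a₂ hC2 hC'2 (fun X h => Or.inr (Or.inl h))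
    obtain ⟨x₃, hx₃a, hx₃ne, hp₃, hp₃'⟩ := key a₃ hC3 hC'3 (fun X h => Or.inr (Or.inr (Or.inl h)))
    obtain ⟨x₄, hx₄a, hx₄ne, hp₄, hp₄'⟩ := key a₄ hC4 hC'4 (fun X h => Or.inr (Or.inr (Or.inr h)))
    set T := Submodule.span (GaloisField p n)
      ({x₁, x₂, x₃, x₄} : Set (Fin 4 → GaloisField p n)) with hT
    have hmemT : ∀ (c : Fin 4 → GaloisField p n), symp c x₁ = 0 → symp c x₂ = 0 →
        symp c x₃ = 0 → symp c x₄ = 0 →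
        c ∈ (sympB (p := p) (n := n)).orthogonal T := by
      intro c h1 h2 h3 h4
      rw [LinearMap.BilinForm.mem_orthogonal_iff]
      intro y hy
      have hzker : ∀ z, symp c z = 0 → z ∈ LinearMap.ker ((sympB (p := p) (n := n)).flip c) := by
        intro z hcz
        rw [LinearMap.mem_ker]
        show symp z c = 0
        rw [symp_skew, hcz, neg_zero]
      have hle : T ≤ LinearMap.ker ((sympB (p := p) (n := n)).flip c) := by
        rw [hT, Submodule.span_le]
        intro z hz
        simp only [Set.mem_insert_iff, Set.mem_singleton_iff] at hz
        rcases hz with rfl | rfl | rfl | rfl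
        · exact hzker _ h1
        · exact hzker _ h2
        · exact hzker _ h3
        · exact hzker _ h4
      have := hle hy
      exact LinearMap.mem_ker.1 this
    have hcT : C.rep ∈ (sympB (p := p) (n := n)).orthogonal T := hmemT _ hp₁ hp₂ hp₃ hp₄
    have hc'T : C'.rep ∈ (sympB (p := p) (n := n)).orthogonal T := hmemT _ hp₁' hp₂' hp₃' hp₄'
    by_cases hr : 3 ≤ Module.finrank (GaloisField p n) T
    · -- orthogonal has dimension ≤ 1, so C = C'
      have hfo := LinearMap.BilinForm.finrank_orthogonal
        (sympB_nondeg (p := p) (n := n)) T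
      have h1 : Module.finrank (GaloisField p n)
          ((sympB (p := p) (n := n)).orthogonal T) ≤ 1 := by
        rw [hfo, Module.finrank_fin_fun]; omega
      have hle : Submodule.span (GaloisField p n) {C.rep} ≤
          (sympB (p := p) (n := n)).orthogonal T :=
        (Submodule.span_singleton_le_iff_mem _ _).2 hcT
      have heq : Submodule.span (GaloisField p n) {C.rep} =
          (sympB (p := p) (n := n)).orthogonal T :=
        Submodule.eq_of_le_of_finrank_le hle
          (by rw [finrank_span_singleton C.rep_nonzero]; exact h1)
      rw [← heq] at hc'T
      obtain ⟨t, ht⟩ := Submodule.mem_span_singleton.1 hc'T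
      have htne : t ≠ 0 := by
        rintro rfl
        rw [zero_smul] at ht
        exact C'.rep_nonzero ht.symm
      rw [← Projectivization.mk_rep C, ← Projectivization.mk_rep C',
        Projectivization.mk_eq_mk_iff]
      exact ⟨(Units.mk0 t htne)⁻¹, by
        rw [← ht, Units.smul_def, Units.val_inv_eq_inv_val, Units.val_mk0, smul_smul,
          inv_mul_cancel₀ htne, one_smul]⟩
    · -- T is 2-dimensional: contradiction with the quadric
      exfalso
      push_neg at hr
      have hind12 : LinearIndependent (GaloisField p n) ![x₁, x₂] := by
        rw [LinearIndependent.pair_iff]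
        intro s t hst
        have hmem12 : s • x₁ ∈ a₁.1 ⊓ a₂.1 := by
          refine ⟨a₁.1.smul_mem s hx₁a, ?_⟩
          have h' : s • x₁ = -(t • x₂) := by
            rw [eq_neg_iff_add_eq_zero]; exact hst
          rw [h']
          exact a₂.1.neg_mem (a₂.1.smul_mem t hx₂a)
        rw [h12] at hmem12
        have hs : s = 0 := by
          rcases smul_eq_zero.1 (Submodule.mem_bot _ |>.1 hmem12) with hs | hx
          · exact hs
          · exact absurd hx hx₁ne
        refine ⟨hs, ?_⟩
        rw [hs, zero_smul, zero_add] at hst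
        rcases smul_eq_zero.1 hst with ht | hx
        · exact ht
        · exact absurd hx hx₂ne
      have hfr12 : Module.finrank (GaloisField p n)
          (Submodule.span (GaloisField p n) ({x₁, x₂} : Set (Fin 4 → GaloisField p n))) = 2 := by
        rw [show ({x₁, x₂} : Set (Fin 4 → GaloisField p n)) = Set.range ![x₁, x₂] from
          (range_pair x₁ x₂).symm]
        rw [finrank_span_eq_card hind12]
        simp
      have hle12 : Submodule.span (GaloisField p n) ({x₁, x₂} : Set (Fin 4 → GaloisField p n)) ≤ T := by
        rw [hT]
        apply Submodule.span_mono
        intro z hz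
        simp only [Set.mem_insert_iff, Set.mem_singleton_iff] at hz ⊢
        tauto
      have heqT : Submodule.span (GaloisField p n) ({x₁, x₂} : Set (Fin 4 → GaloisField p n)) = T :=
        Submodule.eq_of_le_of_finrank_le hle12 (by rw [hfr12]; omega)
      have hx₃T : x₃ ∈ Submodule.span (GaloisField p n) ({x₁, x₂} : Set (Fin 4 → GaloisField p n)) := by
        rw [heqT, hT]
        exact Submodule.subset_span (by simp)
      have hx₄T : x₄ ∈ Submodule.span (GaloisField p n) ({x₁, x₂} : Set (Fin 4 → GaloisField p n)) := by
        rw [heqT, hT]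
        exact Submodule.subset_span (by simp)
      obtain ⟨α, β, h3⟩ := Submodule.mem_span_pair.1 hx₃T
      obtain ⟨γ, δ, h4⟩ := Submodule.mem_span_pair.1 hx₄T
      have hα : α ≠ 0 := by
        rintro rfl
        rw [zero_smul, zero_add] at h3
        have hmem : x₃ ∈ a₂.1 ⊓ a₃.1 := ⟨h3 ▸ a₂.1.smul_mem β hx₂a, hx₃a⟩
        rw [h23] at hmem
        exact hx₃ne (Submodule.mem_bot _ |>.1 hmem)
      have hβ : β ≠ 0 := by
        rintro rfl
        rw [zero_smul, add_zero] at h3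
        have hmem : x₃ ∈ a₁.1 ⊓ a₃.1 := ⟨h3 ▸ a₁.1.smul_mem α hx₁a, hx₃a⟩
        rw [h13] at hmem
        exact hx₃ne (Submodule.mem_bot _ |>.1 hmem)
      obtain ⟨e, he⟩ := hQhyp
      have hpol : ∀ (s t : GaloisField p n) (y z : Fin 4 → GaloisField p n),
          Q (s • y + t • z) = s ^ 2 * Q y + t ^ 2 * Q z +
            (s * t) * (e y 0 * e z 1 + e z 0 * e y 1 + e y 2 * e z 3 + e z 2 * e y 3) := by
        intro s t y z
        rw [he, he, he, map_add, map_smul, map_smul]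
        simp only [Pi.add_apply, Pi.smul_apply, smul_eq_mul]
        ring
      have hQ3' : Q x₃ = 0 := hQ3 x₃ hx₃a
      have hpol12 : e x₁ 0 * e x₂ 1 + e x₂ 0 * e x₁ 1 + e x₁ 2 * e x₂ 3 + e x₂ 2 * e x₁ 3 = 0 := by
        have h := hpol α β x₁ x₂
        rw [h3, hQ3', hQ1 x₁ hx₁a, hQ2 x₂ hx₂a] at h
        simp only [mul_zero, zero_add, add_zero] at h
        rcases mul_eq_zero.1 h.symm with h' | h'
        · exact absurd h' (mul_ne_zero hα hβ)
        · exact h'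
      have hQ4' : Q x₄ = 0 := by
        have h := hpol γ δ x₁ x₂
        rw [h4, hQ1 x₁ hx₁a, hQ2 x₂ hx₂a, hpol12] at h
        simp only [mul_zero, zero_add, add_zero] at h
        exact h
      exact hQ4 x₄ hx₄a hx₄ne hQ4'

end
end
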